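/- arXiv:1602.04746 — 2 statements merged into one kernel-verified Lean document; each statement's English description precedes it below -/
import Mathlib

section
/- Properties of the test function Φ^λ: let T > 0, ξ, ζ ∈ C¹([0,T]; ℝ) with ξ₀ = ζ₀ = 0, and let 0 < λ < 1/Δ_T^+. Define Φ^λ(x,y,t) := λ e_g(x,y) / (1 − λ(ξ_t − ζ_t)). Then (i) λ e_g(x,y)/(1 + λΔ_T^-) ≤ Φ^λ(x,y,t) ≤ λ e_g(x,y)/(1 − λΔ_T^+) for all (x,y,t) ∈ ℝ^N × ℝ^N × [0,T]; and (ii) on the set {(x,y) : d_g(x,y) < Υ} × [0,T], Φ^λ is a classical (pointwise differentiable) solution of ∂_t w = (g^{-1}(x) D_x w, D_x w) ξ̇ − (g^{-1}(y) D_y w, D_y w) ζ̇. -/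
open Set MeasureTheory Topology
noncomputable section

abbrev EV (N : ℕ) := EuclideanSpace ℝ (Fin N)

def quadForm {N : ℕ} (A : Matrix (Fin N) (Fin N) ℝ) (v w : EV N) : ℝ :=
  ∑ i, ∑ j, A i j * v i * w j

def energy {N : ℕ} (g : EV N → Matrix (Fin N) (Fin N) ℝ) (x y : EV N) : ℝ :=
  sInf { e : ℝ | ∃ γ : ℝ → EV N, ContDiffOn ℝ 1 γ (Icc (0:ℝ) 1) ∧ γ 0 = x ∧ γ 1 = y ∧
      e = ∫ t in (0:ℝ)..(1:ℝ), (1/4 : ℝ) * quadForm (g (γ t)) (deriv γ t) (deriv γ t) }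

def dg {N : ℕ} (g : EV N → Matrix (Fin N) (Fin N) ℝ) (x y : EV N) : ℝ :=
  Real.sqrt (energy g x y)

def ginv {N : ℕ} (g : EV N → Matrix (Fin N) (Fin N) ℝ) (x : EV N) : Matrix (Fin N) (Fin N) ℝ :=
  (g x)⁻¹

def UniformlyElliptic {N : ℕ} (g : EV N → Matrix (Fin N) (Fin N) ℝ) (C : ℝ) : Prop :=
  0 < C ∧ ∀ (x w : EV N), (1/C) * ‖w‖^2 ≤ quadForm (g x) w w ∧ quadForm (g x) w w ≤ C * ‖w‖^2

def DeltaPlus (ξ ζ : ℝ → ℝ) (T : ℝ) : ℝ := sSup ((fun s => ξ s - ζ s) '' Icc (0:ℝ) T)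

def DeltaMinus (ξ ζ : ℝ → ℝ) (T : ℝ) : ℝ := sSup ((fun s => ζ s - ξ s) '' Icc (0:ℝ) T)

/-- The test function `Φ^λ(x,y,t) = λ e_g(x,y) / (1 − λ(ξ_t − ζ_t))`. -/
def PhiL {N : ℕ} (g : EV N → Matrix (Fin N) (Fin N) ℝ) (ξ ζ : ℝ → ℝ) (lam : ℝ)
    (x y : EV N) (t : ℝ) : ℝ :=
  lam * energy g x y / (1 - lam * (ξ t - ζ t))

lemma quadForm_zero {N : ℕ} (A : Matrix (Fin N) (Fin N) ℝ) : quadForm A 0 0 = 0 := by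
  simp [quadForm]

lemma quadForm_smul {N : ℕ} (A : Matrix (Fin N) (Fin N) ℝ) (a : ℝ) (v w : EV N) :
    quadForm A (a • v) (a • w) = a^2 * quadForm A v w := by
  simp only [quadForm, Finset.mul_sum, PiLp.smul_apply, smul_eq_mul]
  exact Finset.sum_congr rfl fun i _ => Finset.sum_congr rfl fun j _ => by ring

lemma gradient_const_mul {N : ℕ} {f : EV N → ℝ} {x : EV N} (hf : DifferentiableAt ℝ f x) (a : ℝ) :
    gradient (fun z => a * f z) x = a • gradient f x := by
  rw [gradient, gradient, fderiv_const_mul hf, _root_.map_smul]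

lemma gradient_of_not_diff {N : ℕ} {f : EV N → ℝ} {x : EV N} (hf : ¬ DifferentiableAt ℝ f x) :
    gradient f x = 0 := by
  rw [gradient, fderiv_zero_of_not_differentiableAt hf, map_zero]

variable {N : ℕ} {g : EV N → Matrix (Fin N) (Fin N) ℝ} {C : ℝ}

lemma quadForm_nonneg (hell : UniformlyElliptic g C) (x w : EV N) : 0 ≤ quadForm (g x) w w := by
  have h := (hell.2 x w).1
  have hC := hell.1
  have : (0:ℝ) ≤ (1/C) * ‖w‖^2 := by positivity
  linarith

lemma mem_nonneg (hell : UniformlyElliptic g C) {x y : EV N} {e : ℝ}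
    (he : e ∈ { e : ℝ | ∃ γ : ℝ → EV N, ContDiffOn ℝ 1 γ (Icc (0:ℝ) 1) ∧ γ 0 = x ∧ γ 1 = y ∧
      e = ∫ t in (0:ℝ)..(1:ℝ), (1/4 : ℝ) * quadForm (g (γ t)) (deriv γ t) (deriv γ t) }) :
    0 ≤ e := by
  obtain ⟨γ, hγ, h0, h1, rfl⟩ := he
  apply intervalIntegral.integral_nonneg zero_le_one
  intro u _
  have := quadForm_nonneg hell (γ u) (deriv γ u)
  linarith

lemma energy_nonneg (hell : UniformlyElliptic g C) (x y : EV N) : 0 ≤ energy g x y :=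
  Real.sInf_nonneg fun _ he => mem_nonneg hell he

lemma contOn_quadForm (hg : ∀ i j, Continuous fun x => g x i j) {s : Set ℝ} {γ D : ℝ → EV N}
    (hγ : ContinuousOn γ s) (hD : ContinuousOn D s) :
    ContinuousOn (fun t => quadForm (g (γ t)) (D t) (D t)) s := by
  unfold quadForm
  apply continuousOn_finset_sum; intro i _
  apply continuousOn_finset_sum; intro j _
  have hi : ContinuousOn (fun t => D t i) s := (continuous_apply i).comp_continuousOn ((PiLp.continuous_ofLp 2 _).comp_continuousOn hD)
  have hj : ContinuousOn (fun t => D t j) s := (continuous_apply j).comp_continuousOn ((PiLp.continuous_ofLp 2 _).comp_continuousOn hD)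
  exact (((hg i j).comp_continuousOn hγ).mul hi).mul hj

lemma energy_le (hell : UniformlyElliptic g C) (hg : ∀ i j, Continuous fun x => g x i j)
    (x y : EV N) : energy g x y ≤ C/4 * ‖y - x‖^2 := by
  set γ : ℝ → EV N := fun t => x + t • (y - x) with hγdef
  have hder : ∀ t : ℝ, HasDerivAt γ (y - x) t := by
    intro t
    have := ((hasDerivAt_id t).smul_const (y - x)).const_add x
    simpa [hγdef] using this
  have hcd : ContDiff ℝ 1 γ := by
    exact contDiff_const.add (contDiff_id.smul contDiff_const)
  have hmem : (∫ t in (0:ℝ)..(1:ℝ), (1/4 : ℝ) * quadForm (g (γ t)) (deriv γ t) (deriv γ t)) ∈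
      { e : ℝ | ∃ γ : ℝ → EV N, ContDiffOn ℝ 1 γ (Icc (0:ℝ) 1) ∧ γ 0 = x ∧ γ 1 = y ∧
        e = ∫ t in (0:ℝ)..(1:ℝ), (1/4 : ℝ) * quadForm (g (γ t)) (deriv γ t) (deriv γ t) } :=
    ⟨γ, hcd.contDiffOn, by simp [hγdef], by simp [hγdef], rfl⟩
  have hle : energy g x y ≤ ∫ t in (0:ℝ)..(1:ℝ),
      (1/4 : ℝ) * quadForm (g (γ t)) (deriv γ t) (deriv γ t) :=
    csInf_le ⟨0, fun e he => mem_nonneg hell he⟩ hmem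
  have hdval : ∀ t : ℝ, deriv γ t = y - x := fun t => (hder t).deriv
  have hint : ∫ t in (0:ℝ)..(1:ℝ), (1/4 : ℝ) * quadForm (g (γ t)) (deriv γ t) (deriv γ t)
      ≤ ∫ _t in (0:ℝ)..(1:ℝ), (1/4 : ℝ) * (C * ‖y - x‖^2) := by
    apply intervalIntegral.integral_mono_on zero_le_one
    · apply ContinuousOn.intervalIntegrable
      rw [uIcc_of_le zero_le_one]
      have : ContinuousOn (fun t => quadForm (g (γ t)) (deriv γ t) (deriv γ t)) (Icc 0 1) := by
        simp only [hdval]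
        exact contOn_quadForm hg hcd.continuous.continuousOn continuousOn_const
      exact continuousOn_const.mul this
    · exact intervalIntegrable_const
    · intro u _
      have := (hell.2 (γ u) (deriv γ u)).2
      rw [hdval] at this ⊢
      linarith
  have : (∫ _t in (0:ℝ)..(1:ℝ), (1/4 : ℝ) * (C * ‖y - x‖^2)) = C/4 * ‖y - x‖^2 := by
    simp; ring
  linarith [hle, hint, this.le, this.ge]

lemma energy_self (hell : UniformlyElliptic g C) (hg : ∀ i j, Continuous fun x => g x i j)
    (x : EV N) : energy g x x = 0 := by
  have h1 := energy_le hell hg x x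
  have h2 := energy_nonneg hell x x
  simp at h1
  linarith

lemma energy_set_nonempty (x y : EV N) :
    { e : ℝ | ∃ γ : ℝ → EV N, ContDiffOn ℝ 1 γ (Icc (0:ℝ) 1) ∧ γ 0 = x ∧ γ 1 = y ∧
      e = ∫ t in (0:ℝ)..(1:ℝ), (1/4 : ℝ) * quadForm (g (γ t)) (deriv γ t) (deriv γ t) }.Nonempty := by
  refine ⟨_, fun t => x + t • (y - x), ?_, by simp, by simp, rfl⟩
  exact (contDiff_const.add (contDiff_id.smul contDiff_const)).contDiffOn

lemma energy_ge (hell : UniformlyElliptic g C) (hg : ∀ i j, Continuous fun x => g x i j)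
    (x y : EV N) : 1/(4*C) * ‖y - x‖^2 ≤ energy g x y := by
  apply le_csInf (energy_set_nonempty x y)
  rintro e' ⟨γ, hγ, h0, h1, rfl⟩
  have hu : UniqueDiffOn ℝ (Icc (0:ℝ) 1) := uniqueDiffOn_Icc one_pos
  set D := derivWithin γ (Icc (0:ℝ) 1) with hDdef
  have hDc : ContinuousOn D (Icc (0:ℝ) 1) := hγ.continuousOn_derivWithin hu le_rfl
  have hγc : ContinuousOn γ (Icc (0:ℝ) 1) := hγ.continuousOn
  have hdiff : ∀ t ∈ Ioo (0:ℝ) 1, HasDerivAt γ (D t) t := by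
    intro t ht
    have hmem : Icc (0:ℝ) 1 ∈ 𝓝 t := Icc_mem_nhds ht.1 ht.2
    have hd : DifferentiableAt ℝ γ t :=
      ((hγ.differentiableOn one_ne_zero) t (Ioo_subset_Icc_self ht)).differentiableAt hmem
    have hDt : D t = deriv γ t := derivWithin_of_mem_nhds hmem
    rw [hDt]; exact hd.hasDerivAt
  have hDint : IntervalIntegrable D volume 0 1 :=
    ContinuousOn.intervalIntegrable (by rwa [uIcc_of_le zero_le_one])
  have hFTC : ∫ t in (0:ℝ)..(1:ℝ), D t = γ 1 - γ 0 :=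
    intervalIntegral.integral_eq_sub_of_hasDeriv_right_of_le zero_le_one hγc
      (fun t ht => (hdiff t ht).hasDerivWithinAt) hDint
  have hnorm : ‖y - x‖ ≤ ∫ t in (0:ℝ)..(1:ℝ), ‖D t‖ := by
    calc ‖y - x‖ = ‖∫ t in (0:ℝ)..(1:ℝ), D t‖ := by rw [hFTC, h0, h1]
    _ ≤ ∫ t in (0:ℝ)..(1:ℝ), ‖D t‖ := intervalIntegral.norm_integral_le_integral_norm zero_le_one
  set m := ∫ t in (0:ℝ)..(1:ℝ), ‖D t‖ with hmdef
  have hnD : IntervalIntegrable (fun t => ‖D t‖) volume 0 1 :=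
    ContinuousOn.intervalIntegrable (by rw [uIcc_of_le zero_le_one]; exact hDc.norm)
  have hnD2 : IntervalIntegrable (fun t => ‖D t‖^2) volume 0 1 :=
    ContinuousOn.intervalIntegrable (by rw [uIcc_of_le zero_le_one]; exact hDc.norm.pow 2)
  have hvar : m^2 ≤ ∫ t in (0:ℝ)..(1:ℝ), ‖D t‖^2 := by
    have h0' : (0:ℝ) ≤ ∫ t in (0:ℝ)..(1:ℝ), (‖D t‖ - m)^2 :=
      intervalIntegral.integral_nonneg zero_le_one (fun u _ => sq_nonneg _)
    have hexp : (∫ t in (0:ℝ)..(1:ℝ), (‖D t‖ - m)^2)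
        = (∫ t in (0:ℝ)..(1:ℝ), ‖D t‖^2) - m^2 := by
      have heq : ∀ t : ℝ, (‖D t‖ - m)^2 = ‖D t‖^2 - (2*m)*‖D t‖ + m^2 := fun t => by ring
      simp_rw [heq]
      rw [intervalIntegral.integral_add (hnD2.sub (hnD.const_mul (2*m))) intervalIntegrable_const,
        intervalIntegral.integral_sub hnD2 (hnD.const_mul (2*m)),
        intervalIntegral.integral_const_mul, intervalIntegral.integral_const]
      simp [← hmdef]; ring
    linarith
  have hcongr : (∫ t in (0:ℝ)..(1:ℝ), (1/4 : ℝ) * quadForm (g (γ t)) (deriv γ t) (deriv γ t))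
      = ∫ t in (0:ℝ)..(1:ℝ), (1/4 : ℝ) * quadForm (g (γ t)) (D t) (D t) := by
    apply intervalIntegral.integral_congr_ae
    have hae : ∀ᵐ t : ℝ, t ∉ ({1} : Set ℝ) :=
      (MeasureTheory.measure_eq_zero_iff_ae_notMem).mp (measure_singleton 1)
    filter_upwards [hae] with t ht1 htI
    have hIoo : t ∈ Ioo (0:ℝ) 1 := by
      rw [Set.uIoc_of_le zero_le_one] at htI
      exact ⟨htI.1, lt_of_le_of_ne htI.2 (by simpa using ht1)⟩
    rw [(hdiff t hIoo).deriv]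
  have hmono : (∫ t in (0:ℝ)..(1:ℝ), 1/(4*C) * ‖D t‖^2)
      ≤ ∫ t in (0:ℝ)..(1:ℝ), (1/4 : ℝ) * quadForm (g (γ t)) (D t) (D t) := by
    apply intervalIntegral.integral_mono_on zero_le_one
    · exact hnD2.const_mul _
    · exact ContinuousOn.intervalIntegrable (by
        rw [uIcc_of_le zero_le_one]
        exact continuousOn_const.mul (contOn_quadForm hg hγc hDc))
    · intro u _
      have h := (hell.2 (γ u) (D u)).1
      have he : 1/(4*C) * ‖D u‖^2 = (1/4) * ((1/C) * ‖D u‖^2) := by ring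
      linarith
  have hCpos := hell.1
  have hC4 : (0:ℝ) ≤ 1/(4*C) := by positivity
  have hsq : ‖y - x‖^2 ≤ m^2 := pow_le_pow_left₀ (norm_nonneg _) hnorm 2
  have hc : (∫ t in (0:ℝ)..(1:ℝ), 1/(4*C) * ‖D t‖^2)
      = 1/(4*C) * ∫ t in (0:ℝ)..(1:ℝ), ‖D t‖^2 := intervalIntegral.integral_const_mul _ _
  rw [hcongr]
  calc 1/(4*C) * ‖y - x‖^2 ≤ 1/(4*C) * (∫ t in (0:ℝ)..(1:ℝ), ‖D t‖^2) := by
        apply mul_le_mul_of_nonneg_left _ hC4; linarith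
    _ = ∫ t in (0:ℝ)..(1:ℝ), 1/(4*C) * ‖D t‖^2 := hc.symm
    _ ≤ _ := hmono

lemma squeeze_diff {f : EV N → ℝ} {z : EV N} (K : ℝ) (h0 : f z = 0) (hnn : ∀ w, 0 ≤ f w)
    (hub : ∀ w, f w ≤ K * ‖w - z‖^2) : HasFDerivAt f (0 : EV N →L[ℝ] ℝ) z := by
  rw [hasFDerivAt_iff_isLittleO_nhds_zero, Asymptotics.isLittleO_iff]
  intro c hc
  have hK : (0:ℝ) < max K 1 := lt_of_lt_of_le one_pos (le_max_right _ _)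
  have hball : Metric.ball (0 : EV N) (c / max K 1) ∈ 𝓝 (0 : EV N) :=
    Metric.ball_mem_nhds _ (by positivity)
  filter_upwards [hball] with h hmem
  rw [Metric.mem_ball, dist_zero_right] at hmem
  simp only [h0, sub_zero, ContinuousLinearMap.zero_apply]
  rw [Real.norm_eq_abs, abs_of_nonneg (hnn _)]
  have h1 : f (z + h) ≤ K * ‖h‖^2 := by simpa using hub (z + h)
  have h2 : K * ‖h‖^2 ≤ max K 1 * ‖h‖ * ‖h‖ := by
    nlinarith [norm_nonneg h, le_max_left K 1, sq_nonneg ‖h‖]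
  have h3 : max K 1 * ‖h‖ * ‖h‖ ≤ max K 1 * (c / max K 1) * ‖h‖ := by
    apply mul_le_mul_of_nonneg_right _ (norm_nonneg _)
    exact mul_le_mul_of_nonneg_left hmem.le hK.le
  have h4 : max K 1 * (c / max K 1) = c := by field_simp
  rw [h4] at h3
  linarith

lemma energy_eq_zero_imp (hell : UniformlyElliptic g C) (hg : ∀ i j, Continuous fun x => g x i j)
    {x y : EV N} (h : energy g x y = 0) : x = y := by
  have hge := energy_ge hell hg x y
  have hC := hell.1
  have h4 : (0:ℝ) < 1/(4*C) := by positivity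
  have : ‖y - x‖^2 ≤ 0 := by nlinarith [sq_nonneg ‖y - x‖]
  have : ‖y - x‖ = 0 := by nlinarith [norm_nonneg (y - x)]
  have := norm_eq_zero.mp this
  rw [sub_eq_zero] at this
  exact this.symm

lemma energy_diff_fst (hell : UniformlyElliptic g C) (hg : ∀ i j, Continuous fun x => g x i j)
    {x y : EV N}
    (hq : quadForm (ginv g x) (gradient (fun x' => energy g x' y) x)
        (gradient (fun x' => energy g x' y) x) = energy g x y) :
    DifferentiableAt ℝ (fun x' => energy g x' y) x := by
  by_cases hdiff : DifferentiableAt ℝ (fun x' => energy g x' y) x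
  · exact hdiff
  exfalso
  rw [gradient_of_not_diff hdiff, quadForm_zero] at hq
  have hxy : x = y := energy_eq_zero_imp hell hg hq.symm
  subst hxy
  apply hdiff
  refine (squeeze_diff (f := fun x' => energy g x' x) (C/4) (energy_self hell hg x) (fun w => energy_nonneg hell w x)
    (fun w => ?_)).differentiableAt
  have := energy_le hell hg w x
  rwa [norm_sub_rev] at this

lemma energy_diff_snd (hell : UniformlyElliptic g C) (hg : ∀ i j, Continuous fun x => g x i j)
    {x y : EV N}
    (hq : quadForm (ginv g y) (gradient (fun y' => energy g x y') y)
        (gradient (fun y' => energy g x y') y) = energy g x y) :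
    DifferentiableAt ℝ (fun y' => energy g x y') y := by
  by_cases hdiff : DifferentiableAt ℝ (fun y' => energy g x y') y
  · exact hdiff
  exfalso
  rw [gradient_of_not_diff hdiff, quadForm_zero] at hq
  have hxy : x = y := energy_eq_zero_imp hell hg hq.symm
  subst hxy
  apply hdiff
  exact (squeeze_diff (f := fun y' => energy g x y') (C/4) (energy_self hell hg x) (fun w => energy_nonneg hell x w)
    (fun w => energy_le hell hg x w)).differentiableAt

/-- Lemma 1 of the paper: the sandwich bounds for `Φ^λ` and the fact that
`Φ^λ` is a classical solution of the doubled equation on the strip `{d_g < Υ}`. -/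
theorem stmt4
    {N : ℕ} (hN : 1 ≤ N)
    (g : EV N → Matrix (Fin N) (Fin N) ℝ)
    (hgsymm : ∀ x, (g x).IsSymm)
    (hgC2 : ∀ i j, ContDiff ℝ 2 (fun x => g x i j))
    (C : ℝ) (hell : UniformlyElliptic g C)
    (Υ : ℝ) (hΥ : 0 < Υ)
    (hINJ : ContDiffOn ℝ 1 (fun p : EV N × EV N => energy g p.1 p.2)
      {p : EV N × EV N | dg g p.1 p.2 < Υ})
    (heik : ∀ x y : EV N, dg g x y < Υ →
      quadForm (ginv g x) (gradient (fun x' => energy g x' y) x)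
          (gradient (fun x' => energy g x' y) x) = energy g x y ∧
      quadForm (ginv g y) (gradient (fun y' => energy g x y') y)
          (gradient (fun y' => energy g x y') y) = energy g x y)
    (T : ℝ) (hT : 0 < T)
    (ξ ζ : ℝ → ℝ) (hξ : ContDiff ℝ 1 ξ) (hζ : ContDiff ℝ 1 ζ)
    (hξ0 : ξ 0 = 0) (hζ0 : ζ 0 = 0)
    (lam : ℝ) (hlam : 0 < lam) (hlamΔ : lam * DeltaPlus ξ ζ T < 1) :
    -- (i)  the sandwich bounds
    (∀ (x y : EV N), ∀ t ∈ Icc (0:ℝ) T,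
      lam * energy g x y / (1 + lam * DeltaMinus ξ ζ T) ≤ PhiL g ξ ζ lam x y t ∧
      PhiL g ξ ζ lam x y t ≤ lam * energy g x y / (1 - lam * DeltaPlus ξ ζ T)) ∧
    -- (ii) classical solution of ∂ₜw = (g⁻¹(x)D_xw, D_xw) ξ̇ − (g⁻¹(y)D_yw, D_yw) ζ̇
    (∀ (x y : EV N), dg g x y < Υ → ∀ t ∈ Icc (0:ℝ) T,
      HasDerivAt (fun τ => PhiL g ξ ζ lam x y τ)
        (quadForm (ginv g x) (gradient (fun x' => PhiL g ξ ζ lam x' y t) x)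
            (gradient (fun x' => PhiL g ξ ζ lam x' y t) x) * deriv ξ t
         - quadForm (ginv g y) (gradient (fun y' => PhiL g ξ ζ lam x y' t) y)
            (gradient (fun y' => PhiL g ξ ζ lam x y' t) y) * deriv ζ t) t ∧
      DifferentiableAt ℝ (fun x' => PhiL g ξ ζ lam x' y t) x ∧
      DifferentiableAt ℝ (fun y' => PhiL g ξ ζ lam x y' t) y) := by
  have hC := hell.1
  have hgcont : ∀ i j, Continuous fun x => g x i j := fun i j => (hgC2 i j).continuous
  have hbddp : BddAbove ((fun s => ξ s - ζ s) '' Icc (0:ℝ) T) :=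
    (isCompact_Icc.image_of_continuousOn
      ((hξ.continuous.sub hζ.continuous).continuousOn)).bddAbove
  have hbddm : BddAbove ((fun s => ζ s - ξ s) '' Icc (0:ℝ) T) :=
    (isCompact_Icc.image_of_continuousOn
      ((hζ.continuous.sub hξ.continuous).continuousOn)).bddAbove
  have hΔm0 : 0 ≤ DeltaMinus ξ ζ T :=
    le_csSup hbddm ⟨0, ⟨le_refl 0, hT.le⟩, by simp [hξ0, hζ0]⟩
  have hkey : ∀ t ∈ Icc (0:ℝ) T, 0 < 1 - lam * (ξ t - ζ t) ∧
      1 - lam * DeltaPlus ξ ζ T ≤ 1 - lam * (ξ t - ζ t) ∧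
      1 - lam * (ξ t - ζ t) ≤ 1 + lam * DeltaMinus ξ ζ T := by
    intro t ht
    have h1 : ξ t - ζ t ≤ DeltaPlus ξ ζ T := le_csSup hbddp ⟨t, ht, rfl⟩
    have h2 : ζ t - ξ t ≤ DeltaMinus ξ ζ T := le_csSup hbddm ⟨t, ht, rfl⟩
    refine ⟨by nlinarith, by nlinarith, by nlinarith⟩
  constructor
  · intro x y t ht
    obtain ⟨hpos, hlo, hhi⟩ := hkey t ht
    have hnum : 0 ≤ lam * energy g x y := mul_nonneg hlam.le (energy_nonneg hell x y)
    have hppos : (0:ℝ) < 1 - lam * DeltaPlus ξ ζ T := by linarith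
    have hmpos : (0:ℝ) < 1 + lam * DeltaMinus ξ ζ T := by nlinarith
    unfold PhiL
    constructor
    · gcongr
    · gcongr
  · intro x y hdg t ht
    obtain ⟨heik1, heik2⟩ := heik x y hdg
    have hEx := energy_diff_fst hell hgcont heik1
    have hEy := energy_diff_snd hell hgcont heik2
    obtain ⟨hpos, -, -⟩ := hkey t ht
    set den := 1 - lam * (ξ t - ζ t) with hden
    have hne : den ≠ 0 := ne_of_gt hpos
    have hfx : (fun x' => PhiL g ξ ζ lam x' y t) = fun x' => (lam/den) * energy g x' y := by
      funext x'; simp only [PhiL, ← hden]; ring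
    have hfy : (fun y' => PhiL g ξ ζ lam x y' t) = fun y' => (lam/den) * energy g x y' := by
      funext y'; simp only [PhiL, ← hden]; ring
    have hdx : DifferentiableAt ℝ (fun x' => PhiL g ξ ζ lam x' y t) x := by
      rw [hfx]; exact hEx.const_mul _
    have hdy : DifferentiableAt ℝ (fun y' => PhiL g ξ ζ lam x y' t) y := by
      rw [hfy]; exact hEy.const_mul _
    refine ⟨?_, hdx, hdy⟩
    have hgx : gradient (fun x' => PhiL g ξ ζ lam x' y t) x
        = (lam/den) • gradient (fun x' => energy g x' y) x := by
      rw [hfx]; exact gradient_const_mul hEx _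
    have hgy : gradient (fun y' => PhiL g ξ ζ lam x y' t) y
        = (lam/den) • gradient (fun y' => energy g x y') y := by
      rw [hfy]; exact gradient_const_mul hEy _
    rw [hgx, hgy, quadForm_smul, quadForm_smul, heik1, heik2]
    have hξd : HasDerivAt ξ (deriv ξ t) t := (hξ.differentiable one_ne_zero t).hasDerivAt
    have hζd : HasDerivAt ζ (deriv ζ t) t := (hζ.differentiable one_ne_zero t).hasDerivAt
    have hdenD : HasDerivAt (fun τ => 1 - lam * (ξ τ - ζ τ))
        (-(lam * (deriv ξ t - deriv ζ t))) t := by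
      simpa using ((hξd.sub hζd).const_mul lam).const_sub 1
    have hD := (hasDerivAt_const t (lam * energy g x y)).div hdenD hne
    have hfun : (fun τ => PhiL g ξ ζ lam x y τ)
        = fun τ => lam * energy g x y / (1 - lam * (ξ τ - ζ τ)) := rfl
    rw [hfun]
    refine hD.congr_deriv ?_
    rw [← hden]
    field_simp
    ring
end
end

section
/- One-sided Hessian bound for the Riemannian energy: assume there exists Υ > 0 such that e_g is twice continuously differentiable on {(x,y) : d_g(x,y) < Υ}. Then there is a constant L, depending only on the C²-bounds of g and g^{-1}, such that whenever d_g(x,y) < Υ, the 2N×2N Hessian matrix (D²_{xx}e_g, D²_{xy}e_g; D²_{yx}e_g, D²_{yy}e_g)(x,y) is bounded above, in the sense of quadratic forms, by L·(I_N, −I_N; −I_N, I_N) + L|x − y|² I_{2N}; equivalently, for all p, q ∈ ℝ^N, (p,q)·D²_{(x,y)}e_g(x,y)·(p,q)^T ≤ L|p − q|² + L|x − y|²(|p|² + |q|²). -/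
open Set MeasureTheory
noncomputable section

def C2BoundedWith {N : ℕ} (g : EV N → Matrix (Fin N) (Fin N) ℝ) (M : ℝ) : Prop :=
  (∀ i j, ContDiff ℝ 2 (fun x => g x i j)) ∧
    ∀ (x : EV N) i j, |g x i j| ≤ M ∧ ‖fderiv ℝ (fun x' => g x' i j) x‖ ≤ M ∧
      ‖fderiv ℝ (fderiv ℝ (fun x' => g x' i j)) x‖ ≤ M

namespace Stmt10

variable {N : ℕ}

lemma abs_coord_le (v : EV N) (i : Fin N) : |v i| ≤ ‖v‖ := by
  rw [← Real.sqrt_sq_eq_abs, EuclideanSpace.norm_eq]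
  apply Real.sqrt_le_sqrt
  have := Finset.single_le_sum (f := fun j => ‖v j‖ ^ 2)
    (fun j _ => sq_nonneg _) (Finset.mem_univ i)
  simpa [Real.norm_eq_abs, sq_abs] using this

lemma abs_quadForm_le {A : Matrix (Fin N) (Fin N) ℝ} {Mb : ℝ} (hMb : 0 ≤ Mb)
    (h : ∀ i j, |A i j| ≤ Mb) (v w : EV N) :
    |quadForm A v w| ≤ (N : ℝ) ^ 2 * Mb * (‖v‖ * ‖w‖) := by
  have step1 : |quadForm A v w| ≤ ∑ i, ∑ j, |A i j * v i * w j| := by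
    refine (Finset.abs_sum_le_sum_abs _ _).trans ?_
    exact Finset.sum_le_sum fun i _ => Finset.abs_sum_le_sum_abs _ _
  have step2 : ∀ i j : Fin N, |A i j * v i * w j| ≤ Mb * (‖v‖ * ‖w‖) := by
    intro i j
    rw [abs_mul, abs_mul]
    calc |A i j| * |v i| * |w j| ≤ Mb * ‖v‖ * ‖w‖ := by
          refine mul_le_mul (mul_le_mul (h i j) (abs_coord_le v i) (abs_nonneg _) hMb)
            (abs_coord_le w j) (abs_nonneg _) ?_
          positivity
      _ = Mb * (‖v‖ * ‖w‖) := by ring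
  calc |quadForm A v w| ≤ ∑ i, ∑ j, |A i j * v i * w j| := step1
    _ ≤ ∑ _i : Fin N, ∑ _j : Fin N, Mb * (‖v‖ * ‖w‖) :=
        Finset.sum_le_sum fun i _ => Finset.sum_le_sum fun j _ => step2 i j
    _ = (N : ℝ) ^ 2 * Mb * (‖v‖ * ‖w‖) := by
        simp [Finset.sum_const, Finset.card_univ]; ring

lemma quadForm_matrix_add (A B : Matrix (Fin N) (Fin N) ℝ) (v w : EV N) :
    quadForm (A + B) v w = quadForm A v w + quadForm B v w := by
  simp only [quadForm, Matrix.add_apply, ← Finset.sum_add_distrib]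
  exact Finset.sum_congr rfl fun i _ => Finset.sum_congr rfl fun j _ => by ring

lemma quadForm_matrix_sub (A B : Matrix (Fin N) (Fin N) ℝ) (v w : EV N) :
    quadForm (A - B) v w = quadForm A v w - quadForm B v w := by
  simp only [quadForm, Matrix.sub_apply, ← Finset.sum_sub_distrib]
  exact Finset.sum_congr rfl fun i _ => Finset.sum_congr rfl fun j _ => by ring

lemma quadForm_add_left (A : Matrix (Fin N) (Fin N) ℝ) (v v' w : EV N) :
    quadForm A (v + v') w = quadForm A v w + quadForm A v' w := by
  simp only [quadForm, PiLp.add_apply, ← Finset.sum_add_distrib]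
  exact Finset.sum_congr rfl fun i _ => Finset.sum_congr rfl fun j _ => by ring

lemma quadForm_add_right (A : Matrix (Fin N) (Fin N) ℝ) (v w w' : EV N) :
    quadForm A v (w + w') = quadForm A v w + quadForm A v w' := by
  simp only [quadForm, PiLp.add_apply, ← Finset.sum_add_distrib]
  exact Finset.sum_congr rfl fun i _ => Finset.sum_congr rfl fun j _ => by ring

lemma quadForm_smul_left (A : Matrix (Fin N) (Fin N) ℝ) (c : ℝ) (v w : EV N) :
    quadForm A (c • v) w = c * quadForm A v w := by
  simp only [quadForm, PiLp.smul_apply, smul_eq_mul, Finset.mul_sum]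
  exact Finset.sum_congr rfl fun i _ => Finset.sum_congr rfl fun j _ => by ring

lemma quadForm_smul_right (A : Matrix (Fin N) (Fin N) ℝ) (c : ℝ) (v w : EV N) :
    quadForm A v (c • w) = c * quadForm A v w := by
  simp only [quadForm, PiLp.smul_apply, smul_eq_mul, Finset.mul_sum]
  exact Finset.sum_congr rfl fun i _ => Finset.sum_congr rfl fun j _ => by ring

/-- expansion of the quadratic form along `u + c • d`. -/
lemma quadForm_expand (A : Matrix (Fin N) (Fin N) ℝ) (u d : EV N) (c : ℝ) :
    quadForm A (u + c • d) (u + c • d) =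
      quadForm A u u + c * (quadForm A u d + quadForm A d u) + c ^ 2 * quadForm A d d := by
  rw [quadForm_add_left, quadForm_add_right, quadForm_add_right, quadForm_smul_left,
    quadForm_smul_left, quadForm_smul_right, quadForm_smul_right]
  ring

lemma quadForm_eq_dot (A : Matrix (Fin N) (Fin N) ℝ) (v w : EV N) :
    quadForm A v w = dotProduct (fun i => v i) (A.mulVec (fun j => w j)) := by
  simp only [quadForm, dotProduct, Matrix.mulVec, Finset.mul_sum]
  exact Finset.sum_congr rfl fun i _ => Finset.sum_congr rfl fun j _ => by ring

lemma quadForm_symm {A : Matrix (Fin N) (Fin N) ℝ} (hA : A.IsSymm) (v w : EV N) :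
    quadForm A v w = quadForm A w v := by
  rw [quadForm, Finset.sum_comm, quadForm]
  refine Finset.sum_congr rfl fun i _ => Finset.sum_congr rfl fun j _ => ?_
  rw [← hA.apply i j]
  ring

/-- Cauchy–Schwarz for a nonneg symmetric quadratic form. -/
lemma quadForm_cauchy_schwarz {A : Matrix (Fin N) (Fin N) ℝ} (hA : A.IsSymm)
    (hpos : ∀ z : EV N, 0 ≤ quadForm A z z) (v w : EV N) :
    (quadForm A v w) ^ 2 ≤ quadForm A v v * quadForm A w w := by
  have key : ∀ c : ℝ, 0 ≤ quadForm A w w * (c * c) + (2 * quadForm A v w) * c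
      + quadForm A v v := by
    intro c
    have := hpos (v + c • w)
    rw [quadForm_expand] at this
    have hsymm := quadForm_symm hA v w
    have hc : c ^ 2 = c * c := sq c
    rw [← hsymm] at this
    linarith [this]
  have := discrim_le_zero key
  rw [discrim] at this
  nlinarith [this]




-- test coordinate continuity
example {N : ℕ} (i : Fin N) : Continuous (fun v : EV N => v i) := by
  fun_prop

variable {N : ℕ} {g : EV N → Matrix (Fin N) (Fin N) ℝ} {M Cg : ℝ}

lemma entry_lip (hg : C2BoundedWith g M) (a b : EV N) (i j : Fin N) :
    |g a i j - g b i j| ≤ M * ‖a - b‖ := by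
  have hdiff : ∀ x ∈ (univ : Set (EV N)), DifferentiableAt ℝ (fun x => g x i j) x :=
    fun x _ => ((hg.1 i j).differentiable (by norm_num)).differentiableAt
  have hbd : ∀ x ∈ (univ : Set (EV N)), ‖fderiv ℝ (fun x' => g x' i j) x‖ ≤ M :=
    fun x _ => (hg.2 x i j).2.1
  have := convex_univ.norm_image_sub_le_of_norm_fderiv_le hdiff hbd (mem_univ b) (mem_univ a)
  simpa [Real.norm_eq_abs] using this

lemma entry_fderiv_lip (hg : C2BoundedWith g M) (a b : EV N) (i j : Fin N) :
    ‖fderiv ℝ (fun x => g x i j) a - fderiv ℝ (fun x => g x i j) b‖ ≤ M * ‖a - b‖ := by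
  have hcd : ContDiff ℝ 1 (fderiv ℝ (fun x => g x i j)) :=
    (hg.1 i j).fderiv_right (by norm_num)
  have hdiff : ∀ x ∈ (univ : Set (EV N)), DifferentiableAt ℝ (fderiv ℝ (fun x => g x i j)) x :=
    fun x _ => (hcd.differentiable one_ne_zero).differentiableAt
  have hbd : ∀ x ∈ (univ : Set (EV N)), ‖fderiv ℝ (fderiv ℝ (fun x' => g x' i j)) x‖ ≤ M :=
    fun x _ => (hg.2 x i j).2.2
  exact convex_univ.norm_image_sub_le_of_norm_fderiv_le hdiff hbd (mem_univ b) (mem_univ a)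

lemma M_nonneg (hg : C2BoundedWith g M) [NeZero N] : 0 ≤ M :=
  le_trans (abs_nonneg _) (hg.2 0 0 0).1

lemma entry_secdiff (hg : C2BoundedWith g M) (a u : EV N) (i j : Fin N) :
    |g (a + u) i j + g (a - u) i j - g a i j - g a i j| ≤ 2 * M * ‖u‖ ^ 2 := by
  set h : EV N → ℝ := fun x => g x i j with hh
  set φ := fderiv ℝ h a with hφ
  have hM0 : 0 ≤ M := le_trans (abs_nonneg _) (hg.2 a i j).1
  have hdiff : ∀ x ∈ Metric.closedBall a ‖u‖, DifferentiableAt ℝ h x :=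
    fun x _ => ((hg.1 i j).differentiable (by norm_num)).differentiableAt
  have hbd : ∀ x ∈ Metric.closedBall a ‖u‖, ‖fderiv ℝ h x - φ‖ ≤ M * ‖u‖ := by
    intro x hx
    refine (entry_fderiv_lip hg x a i j).trans ?_
    have : ‖x - a‖ ≤ ‖u‖ := by
      rw [← dist_eq_norm]; exact Metric.mem_closedBall.mp hx
    exact mul_le_mul_of_nonneg_left this hM0
  have hmem0 : a ∈ Metric.closedBall a ‖u‖ := Metric.mem_closedBall_self (norm_nonneg u)
  have hmem1 : a + u ∈ Metric.closedBall a ‖u‖ := by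
    rw [Metric.mem_closedBall, dist_eq_norm]; simp
  have hmem2 : a - u ∈ Metric.closedBall a ‖u‖ := by
    rw [Metric.mem_closedBall, dist_eq_norm]; simp
  have h1 := (convex_closedBall a ‖u‖).norm_image_sub_le_of_norm_fderiv_le' hdiff hbd hmem0 hmem1
  have h2 := (convex_closedBall a ‖u‖).norm_image_sub_le_of_norm_fderiv_le' hdiff hbd hmem0 hmem2
  have e1 : a + u - a = u := by abel
  have e2 : a - u - a = -u := by abel
  rw [e1] at h1
  rw [e2] at h2
  rw [map_neg] at h2
  have hnu : ‖(-u : EV N)‖ = ‖u‖ := norm_neg u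
  rw [hnu] at h2
  have key : h (a + u) + h (a - u) - h a - h a
      = (h (a + u) - h a - φ u) + (h (a - u) - h a - -(φ u)) := by ring
  calc |g (a + u) i j + g (a - u) i j - g a i j - g a i j|
      = |(h (a + u) - h a - φ u) + (h (a - u) - h a - -(φ u))| := by rw [← key]
    _ ≤ |h (a + u) - h a - φ u| + |h (a - u) - h a - -(φ u)| := abs_add_le _ _
    _ ≤ M * ‖u‖ * ‖u‖ + M * ‖u‖ * ‖u‖ := by
        exact add_le_add (by simpa [Real.norm_eq_abs] using h1)
          (by simpa [Real.norm_eq_abs] using h2)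
    _ = 2 * M * ‖u‖ ^ 2 := by ring


/-- the universal constant -/
def Kc (N : ℕ) (M : ℝ) : ℝ := 2 * (N : ℝ) ^ 2 * M + 1

lemma Kc_pos (hM : 0 < M) : 0 < Kc N M := by
  have : (0:ℝ) ≤ (N:ℝ)^2 := sq_nonneg _
  unfold Kc; nlinarith

lemma H0 (hell : UniformlyElliptic g Cg) (a v : EV N) : 0 ≤ quadForm (g a) v v := by
  refine le_trans ?_ ((hell.2 a v).1)
  have := hell.1
  positivity

lemma H1 (hM : 0 < M) (hg : C2BoundedWith g M) (a : EV N) (v w : EV N) :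
    |quadForm (g a) v w| ≤ Kc N M * (‖v‖ * ‖w‖) := by
  refine (abs_quadForm_le hM.le (fun i j => (hg.2 a i j).1) v w).trans ?_
  have h1 : (N:ℝ)^2 * M ≤ Kc N M := by
    unfold Kc; nlinarith [sq_nonneg (N:ℝ)]
  have : (0:ℝ) ≤ ‖v‖ * ‖w‖ := by positivity
  exact mul_le_mul_of_nonneg_right h1 this

lemma H3 (hM : 0 < M) (hg : C2BoundedWith g M) (a b : EV N) (v w : EV N) :
    |quadForm (g a - g b) v w| ≤ Kc N M * ‖a - b‖ * (‖v‖ * ‖w‖) := by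
  have hMb : (0:ℝ) ≤ M * ‖a - b‖ := by positivity
  have hent : ∀ i j, |(g a - g b) i j| ≤ M * ‖a - b‖ := by
    intro i j; rw [Matrix.sub_apply]; exact entry_lip hg a b i j
  refine (abs_quadForm_le hMb hent v w).trans ?_
  have h1 : (N:ℝ)^2 * (M * ‖a - b‖) ≤ Kc N M * ‖a - b‖ := by
    have : (N:ℝ)^2 * M ≤ Kc N M := by unfold Kc; nlinarith [sq_nonneg (N:ℝ)]
    nlinarith [norm_nonneg (a - b)]
  have : (0:ℝ) ≤ ‖v‖ * ‖w‖ := by positivity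
  exact mul_le_mul_of_nonneg_right h1 this

lemma H4 (hM : 0 < M) (hg : C2BoundedWith g M) (a u : EV N) (v w : EV N) :
    |quadForm (g (a + u) + g (a - u) - g a - g a) v w| ≤ Kc N M * ‖u‖ ^ 2 * (‖v‖ * ‖w‖) := by
  have hMb : (0:ℝ) ≤ 2 * M * ‖u‖ ^ 2 := by positivity
  have hent : ∀ i j, |(g (a + u) + g (a - u) - g a - g a) i j| ≤ 2 * M * ‖u‖ ^ 2 := by
    intro i j
    simp only [Matrix.sub_apply, Matrix.add_apply]
    exact entry_secdiff hg a u i j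
  refine (abs_quadForm_le hMb hent v w).trans ?_
  have h1 : (N:ℝ)^2 * (2 * M * ‖u‖ ^ 2) ≤ Kc N M * ‖u‖ ^ 2 := by
    have h2 : (N:ℝ)^2 * (2 * M) ≤ Kc N M := by unfold Kc; nlinarith [sq_nonneg (N:ℝ)]
    nlinarith [sq_nonneg ‖u‖]
  have : (0:ℝ) ≤ ‖v‖ * ‖w‖ := by positivity
  exact mul_le_mul_of_nonneg_right h1 this

lemma norm_sq_eq_sum (v : EV N) : ‖v‖ ^ 2 = ∑ i, v i * v i := by
  rw [EuclideanSpace.norm_eq, Real.sq_sqrt (by positivity)]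
  exact Finset.sum_congr rfl fun i _ => by rw [Real.norm_eq_abs, sq_abs, sq]

lemma H2 (hM : 0 < M) (hsym : ∀ x, (g x).IsSymm) (hell : UniformlyElliptic g Cg)
    (hg : C2BoundedWith g M) (hginv : C2BoundedWith (ginv g) M) (a : EV N) (v : EV N) :
    ‖v‖ ^ 2 ≤ Kc N M * quadForm (g a) v v := by
  rcases eq_or_ne v 0 with rfl | hv
  · have h0 := H0 hell a (0 : EV N)
    have := Kc_pos (N := N) hM
    simp only [norm_zero]
    nlinarith [mul_nonneg (le_of_lt this) h0]
  · set A := g a with hA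
    have hpd : A.PosDef := by
      refine Matrix.PosDef.of_dotProduct_mulVec_pos (hsym a) fun z hz => ?_
      set z' : EV N := WithLp.toLp 2 z with hz'def
      have hz' : z' ≠ 0 := fun h => hz (funext fun i => congrArg (fun v : EV N => v i) h)
      have h1 := (hell.2 a z').1
      have hzn : (0:ℝ) < ‖z'‖ := norm_pos_iff.mpr hz'
      have hCg := hell.1
      have hp : (0:ℝ) < 1 / Cg * ‖z'‖ ^ 2 :=
        mul_pos (by positivity) (pow_pos hzn 2)
      have h3 : (0:ℝ) < quadForm (g a) z' z' := lt_of_lt_of_le hp h1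
      have h4 : quadForm (g a) z' z'
          = dotProduct z (A.mulVec z) := quadForm_eq_dot A z' z'
      rw [star_trivial]
      rw [h4] at h3
      exact h3
    have hdet : IsUnit A.det := isUnit_iff_ne_zero.mpr hpd.det_pos.ne'
    have hAAinv : A * A⁻¹ = 1 := Matrix.mul_nonsing_inv A hdet
    set w : EV N := WithLp.toLp 2 (A⁻¹.mulVec (fun i => v i) : Fin N → ℝ) with hw
    have hmul : A.mulVec (fun i => w i) = (fun i => v i) := by
      show A.mulVec (A⁻¹.mulVec (fun i => v i)) = (fun i => v i)
      rw [Matrix.mulVec_mulVec, hAAinv, Matrix.one_mulVec]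
    have hBvw : quadForm A v w = ‖v‖ ^ 2 := by
      rw [quadForm_eq_dot, hmul, norm_sq_eq_sum]
      try rfl
    have hBww : quadForm A w w ≤ Kc N M * ‖v‖ ^ 2 := by
      have e1 : quadForm A w w = dotProduct (fun i => w i) (A.mulVec fun i => w i) :=
        quadForm_eq_dot A w w
      rw [hmul] at e1
      have e2 : dotProduct (fun i => w i) (fun i => v i)
          = quadForm A⁻¹ v v := by
        rw [quadForm_eq_dot, dotProduct_comm]
        try rfl
      rw [e1, e2]
      have hbnd := H1 hM hginv a v v
      have : quadForm (ginv g a) v v = quadForm A⁻¹ v v := rfl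
      rw [this] at hbnd
      calc quadForm A⁻¹ v v ≤ |quadForm A⁻¹ v v| := le_abs_self _
        _ ≤ Kc N M * (‖v‖ * ‖v‖) := hbnd
        _ = Kc N M * ‖v‖ ^ 2 := by ring
    have hCS := quadForm_cauchy_schwarz (hsym a) (fun z => H0 hell a z) v w
    rw [hBvw] at hCS
    have hvpos : (0:ℝ) < ‖v‖ ^ 2 := by
      have := norm_pos_iff.mpr hv
      positivity
    have hB0 : 0 ≤ quadForm A v v := H0 hell a v
    -- (‖v‖²)² ≤ Q(v,v) · Q(w,w) ≤ Q(v,v) · K‖v‖²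
    have hKpos := Kc_pos (N := N) hM
    nlinarith [hCS, hBww, hB0, hvpos]

lemma contOn_quad {α β δ : ℝ → EV N} {s : Set ℝ}
    (hg1 : ∀ i j, ContDiff ℝ 2 fun x => g x i j)
    (hα : ContinuousOn α s) (hβ : ContinuousOn β s) (hδ : ContinuousOn δ s) :
    ContinuousOn (fun t => quadForm (g (α t)) (β t) (δ t)) s := by
  simp only [quadForm]
  apply continuousOn_finset_sum
  intro i _
  apply continuousOn_finset_sum
  intro j _
  have h1 : ContinuousOn (fun t => g (α t) i j) s :=
    ((hg1 i j).continuous).comp_continuousOn hα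
  have h2 : ContinuousOn (fun t => β t i) s := ((continuous_apply i).comp (PiLp.continuous_ofLp 2 (fun _ : Fin N => ℝ))).comp_continuousOn hβ
  have h3 : ContinuousOn (fun t => δ t j) s := ((continuous_apply j).comp (PiLp.continuous_ofLp 2 (fun _ : Fin N => ℝ))).comp_continuousOn hδ
  exact (h1.mul h2).mul h3

end Stmt10

namespace Stmt10

variable {N : ℕ} {g : EV N → Matrix (Fin N) (Fin N) ℝ} {M Cg : ℝ}

def eset (g : EV N → Matrix (Fin N) (Fin N) ℝ) (x y : EV N) : Set ℝ :=
  { e : ℝ | ∃ γ : ℝ → EV N, ContDiffOn ℝ 1 γ (Icc (0:ℝ) 1) ∧ γ 0 = x ∧ γ 1 = y ∧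
      e = ∫ t in (0:ℝ)..(1:ℝ), (1/4 : ℝ) * quadForm (g (γ t)) (deriv γ t) (deriv γ t) }

lemma energy_eq (x y : EV N) : energy g x y = sInf (eset g x y) := rfl

lemma line_hasDerivAt (x y : EV N) (t : ℝ) :
    HasDerivAt (fun s : ℝ => x + s • (y - x)) (y - x) t := by
  simpa using ((hasDerivAt_id t).smul_const (y - x)).const_add x

lemma line_contDiff (x y : EV N) : ContDiff ℝ 1 (fun s : ℝ => x + s • (y - x)) :=
  contDiff_const.add (contDiff_id.smul contDiff_const)

lemma line_mem (x y : EV N) :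
    (∫ s in (0:ℝ)..1, (1/4 : ℝ) * quadForm (g (x + s • (y - x))) (y - x) (y - x))
      ∈ eset g x y := by
  refine ⟨fun s : ℝ => x + s • (y - x), (line_contDiff x y).contDiffOn, by simp, by simp, ?_⟩
  refine intervalIntegral.integral_congr (fun s _ => ?_) |>.symm
  rw [(line_hasDerivAt x y s).deriv]

lemma mem_nonneg (hell : UniformlyElliptic g Cg) {x y : EV N} {e : ℝ}
    (he : e ∈ eset g x y) : 0 ≤ e := by
  obtain ⟨γ, _, _, _, rfl⟩ := he
  refine intervalIntegral.integral_nonneg (by norm_num) (fun u _ => ?_)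
  have := H0 hell (γ u) (deriv γ u)
  linarith

lemma eset_nonempty (x y : EV N) : (eset g x y).Nonempty := ⟨_, line_mem x y⟩

lemma eset_bddBelow (hell : UniformlyElliptic g Cg) (x y : EV N) :
    BddBelow (eset g x y) := ⟨0, fun e he => mem_nonneg hell he⟩

lemma energy_nonneg (hell : UniformlyElliptic g Cg) (x y : EV N) : 0 ≤ energy g x y := by
  rw [energy_eq]
  exact le_csInf (eset_nonempty x y) (fun e he => mem_nonneg hell he)

lemma energy_le_of_mem (hell : UniformlyElliptic g Cg) {x y : EV N} {e : ℝ}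
    (he : e ∈ eset g x y) : energy g x y ≤ e := by
  rw [energy_eq]; exact csInf_le (eset_bddBelow hell x y) he

lemma exists_nearopt (x y : EV N) {δ : ℝ} (hδ : 0 < δ) :
    ∃ e ∈ eset g x y, e < energy g x y + δ := by
  rw [energy_eq]; exact Real.lt_sInf_add_pos (eset_nonempty x y) hδ

lemma integral_congr_Ioo {f h : ℝ → ℝ} (hfh : ∀ s ∈ Ioo (0:ℝ) 1, f s = h s) :
    ∫ s in (0:ℝ)..1, f s = ∫ s in (0:ℝ)..1, h s := by
  apply intervalIntegral.integral_congr_ae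
  have h1 : ∀ᵐ (t : ℝ), t ≠ 1 := by
    rw [MeasureTheory.ae_iff]
    have : {t : ℝ | ¬ t ≠ 1} = {1} := by ext t; simp
    rw [this]
    exact Real.volume_singleton
  filter_upwards [h1] with t ht htI
  rw [Set.uIoc_of_le (by norm_num : (0:ℝ) ≤ 1)] at htI
  exact hfh t ⟨htI.1, lt_of_le_of_ne htI.2 ht⟩

lemma deriv_eq_derivWithin {γ : ℝ → EV N} {s : ℝ}
    (hs : s ∈ Ioo (0:ℝ) 1) : deriv γ s = derivWithin γ (Icc 0 1) s :=
  (derivWithin_of_mem_nhds (Icc_mem_nhds hs.1 hs.2)).symm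

lemma diffAt_of_admissible {γ : ℝ → EV N} (hγ : ContDiffOn ℝ 1 γ (Icc 0 1)) {s : ℝ}
    (hs : s ∈ Ioo (0:ℝ) 1) : DifferentiableAt ℝ γ s :=
  ((hγ.differentiableOn one_ne_zero) s (Ioo_subset_Icc_self hs)).differentiableAt
    (Icc_mem_nhds hs.1 hs.2)

lemma contOn_derivWithin {γ : ℝ → EV N} (hγ : ContDiffOn ℝ 1 γ (Icc 0 1)) :
    ContinuousOn (derivWithin γ (Icc 0 1)) (Icc 0 1) :=
  hγ.continuousOn_derivWithin (uniqueDiffOn_Icc one_pos) le_rfl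

/-- The fundamental perturbation estimate: perturbing an admissible curve affinely. -/
lemma energy_le_pert (hell : UniformlyElliptic g Cg) {γ : ℝ → EV N}
    (hγ : ContDiffOn ℝ 1 γ (Icc 0 1)) {x y : EV N} (h0 : γ 0 = x) (h1 : γ 1 = y)
    (a b : EV N) :
    energy g (x + a) (y + b) ≤
      ∫ s in (0:ℝ)..1, (1/4 : ℝ) * quadForm (g (γ s + (a + s • (b - a))))
        (derivWithin γ (Icc 0 1) s + (b - a)) (derivWithin γ (Icc 0 1) s + (b - a)) := by
  set w : ℝ → EV N := fun s => a + s • (b - a) with hw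
  have hwd : ∀ t : ℝ, HasDerivAt w (b - a) t := fun t => line_hasDerivAt a b t
  have hwcd : ContDiff ℝ 1 w := line_contDiff a b
  set γ' : ℝ → EV N := fun s => γ s + w s with hγ'
  have hγ'cd : ContDiffOn ℝ 1 γ' (Icc 0 1) := hγ.add hwcd.contDiffOn
  have h0' : γ' 0 = x + a := by simp [hγ', hw, h0]
  have h1' : γ' 1 = y + b := by
    simp only [hγ', hw, h1, one_smul]
    abel
  have hmem : (∫ t in (0:ℝ)..1, (1/4:ℝ) * quadForm (g (γ' t)) (deriv γ' t) (deriv γ' t))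
      ∈ eset g (x + a) (y + b) := ⟨γ', hγ'cd, h0', h1', rfl⟩
  refine le_trans (energy_le_of_mem hell hmem) (le_of_eq ?_)
  apply integral_congr_Ioo
  intro s hs
  have hdγ : HasDerivAt γ (derivWithin γ (Icc 0 1) s) s := by
    have := (diffAt_of_admissible hγ hs).hasDerivAt
    rwa [deriv_eq_derivWithin hs] at this
  have hd : deriv γ' s = derivWithin γ (Icc 0 1) s + (b - a) := (hdγ.add (hwd s)).deriv
  rw [hd]

end Stmt10

namespace Stmt10

variable {N : ℕ} {g : EV N → Matrix (Fin N) (Fin N) ℝ} {M Cg : ℝ}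

lemma intervalIntegrable_of_contOn {f : ℝ → ℝ} (hf : ContinuousOn f (Icc 0 1)) :
    IntervalIntegrable f volume 0 1 := by
  apply ContinuousOn.intervalIntegrable
  rwa [Set.uIcc_of_le (by norm_num : (0:ℝ) ≤ 1)]


/-- purely scalar arithmetic core. -/
lemma core_arith {K t R nu nd nw A1 A2 A3 A4 B1 B2 B3 B4 C1 : ℝ}
    (hK0 : 0 < K) (ht : 0 ≤ t) (hws : nw ≤ R) (hnw : 0 ≤ nw) (hnu : 0 ≤ nu) (hnd : 0 ≤ nd)
    (hT1 : A1 + B1 - C1 - C1 ≤ K * (t^2 * nw^2) * (nu * nu))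
    (hT2a : A2 - B2 ≤ 2 * K * (t * nw) * (nu * nd))
    (hT2b : A3 - B3 ≤ 2 * K * (t * nw) * (nu * nd))
    (hT3p : A4 ≤ K * (nd * nd)) (hT3m : B4 ≤ K * (nd * nd)) :
    (1/4:ℝ) * (A1 + t * (A2 + A3) + t^2 * A4)
      + (1/4:ℝ) * (B1 + (-t) * (B2 + B3) + (-t)^2 * B4)
      - 2 * ((1/4:ℝ) * C1)
    ≤ t^2 / 4 * (3 * K * R^2 * nu^2 + 4 * K * nd^2) := by
  have ht2 : (0:ℝ) ≤ t^2 := sq_nonneg t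
  have hcross : t * ((A2 - B2) + (A3 - B3)) ≤ 4 * K * (t^2 * nw) * (nu * nd) := by
    calc t * ((A2 - B2) + (A3 - B3))
        ≤ t * (2 * K * (t * nw) * (nu * nd) + 2 * K * (t * nw) * (nu * nd)) :=
          mul_le_mul_of_nonneg_left (add_le_add hT2a hT2b) ht
      _ = 4 * K * (t^2 * nw) * (nu * nd) := by ring
  have hamgm : 4 * K * (t^2 * nw) * (nu * nd) ≤ 2 * K * t^2 * (nw^2 * nu^2 + nd^2) := by
    nlinarith [sq_nonneg (nw * nu - nd), mul_nonneg hK0.le ht2]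
  have hmul3p : t^2 * A4 ≤ t^2 * (K * (nd * nd)) := mul_le_mul_of_nonneg_left hT3p ht2
  have hmul3m : t^2 * B4 ≤ t^2 * (K * (nd * nd)) := mul_le_mul_of_nonneg_left hT3m ht2
  have hws2 : K * t^2 * (nw^2 * nu^2) ≤ K * t^2 * (R^2 * nu^2) := by
    have h1 : nw^2 ≤ R^2 := by nlinarith
    have h2 : nw^2 * nu^2 ≤ R^2 * nu^2 := mul_le_mul_of_nonneg_right h1 (sq_nonneg nu)
    exact mul_le_mul_of_nonneg_left h2 (mul_nonneg hK0.le ht2)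
  have hws3 : 2 * (K * t^2 * (nw^2 * nu^2)) ≤ 2 * (K * t^2 * (R^2 * nu^2)) := by linarith
  nlinarith [hT1, hcross, hamgm, hmul3p, hmul3m, hws2, hws3]

/-- pointwise second-difference estimate for the integrand. -/
lemma core_est (hM : 0 < M) (hg : C2BoundedWith g M)
    (a ws u d : EV N) {t : ℝ} (ht : 0 ≤ t) {R : ℝ} (hws : ‖ws‖ ≤ R) :
    (1/4:ℝ) * quadForm (g (a + t • ws)) (u + t • d) (u + t • d)
      + (1/4:ℝ) * quadForm (g (a - t • ws)) (u + (-t) • d) (u + (-t) • d)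
      - 2 * ((1/4:ℝ) * quadForm (g a) u u)
    ≤ t^2 / 4 * (3 * Kc N M * R^2 * ‖u‖^2 + 4 * Kc N M * ‖d‖^2) := by
  set K := Kc N M with hKdef
  have hK0 : 0 < K := Kc_pos hM
  set U := t • ws with hU
  have hUn : ‖U‖ = t * ‖ws‖ := by
    rw [hU, norm_smul, Real.norm_eq_abs, abs_of_nonneg ht]
  rw [quadForm_expand (g (a + U)) u d t, quadForm_expand (g (a - U)) u d (-t)]
  -- T1
  have hT1eq : quadForm (g (a + U) + g (a - U) - g a - g a) u u
      = quadForm (g (a + U)) u u + quadForm (g (a - U)) u u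
        - quadForm (g a) u u - quadForm (g a) u u := by
    rw [quadForm_matrix_sub, quadForm_matrix_sub, quadForm_matrix_add]
  have hT1 : quadForm (g (a + U)) u u + quadForm (g (a - U)) u u
        - quadForm (g a) u u - quadForm (g a) u u ≤ K * (t^2 * ‖ws‖^2) * (‖u‖ * ‖u‖) := by
    have h := H4 hM hg a U u u
    rw [hT1eq] at h
    refine (le_abs_self _).trans (h.trans (le_of_eq ?_))
    rw [hUn]; ring
  -- T2 bounds
  have hsub : a + U - (a - U) = U + U := by abel
  have hUU : ‖U + U‖ ≤ 2 * ‖U‖ := by simpa [two_mul] using norm_add_le U U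
  have hT2gen : ∀ v w : EV N, quadForm (g (a + U)) v w - quadForm (g (a - U)) v w
      ≤ 2 * K * (t * ‖ws‖) * (‖v‖ * ‖w‖) := by
    intro v w
    rw [← quadForm_matrix_sub]
    refine (le_abs_self _).trans ((H3 hM hg (a + U) (a - U) v w).trans ?_)
    rw [hsub]
    have h1 : K * ‖U + U‖ ≤ K * (2 * ‖U‖) := mul_le_mul_of_nonneg_left hUU hK0.le
    have h2 : (0:ℝ) ≤ ‖v‖ * ‖w‖ := by positivity
    calc K * ‖U + U‖ * (‖v‖ * ‖w‖) ≤ K * (2 * ‖U‖) * (‖v‖ * ‖w‖) :=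
          mul_le_mul_of_nonneg_right h1 h2
      _ = 2 * K * (t * ‖ws‖) * (‖v‖ * ‖w‖) := by rw [hUn]; ring
  have hT2a := hT2gen u d
  have hT2b' := hT2gen d u
  have hT2b : quadForm (g (a + U)) d u - quadForm (g (a - U)) d u
      ≤ 2 * K * (t * ‖ws‖) * (‖u‖ * ‖d‖) := by
    refine hT2b'.trans (le_of_eq ?_); ring
  -- T3 bounds
  have hT3p : quadForm (g (a + U)) d d ≤ K * (‖d‖ * ‖d‖) :=
    (le_abs_self _).trans (H1 hM hg (a + U) d d)
  have hT3m : quadForm (g (a - U)) d d ≤ K * (‖d‖ * ‖d‖) :=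
    (le_abs_self _).trans (H1 hM hg (a - U) d d)
  exact core_arith hK0 ht hws (norm_nonneg ws) (norm_nonneg u) (norm_nonneg d)
    hT1 hT2a hT2b hT3p hT3m


lemma energy_le_line (hM : 0 < M) (hell : UniformlyElliptic g Cg) (hg : C2BoundedWith g M)
    (x y : EV N) : energy g x y ≤ Kc N M / 4 * ‖y - x‖ ^ 2 := by
  refine (energy_le_of_mem hell (line_mem x y)).trans ?_
  have hcont : ContinuousOn
      (fun s : ℝ => (1/4:ℝ) * quadForm (g (x + s • (y - x))) (y - x) (y - x)) (Icc 0 1) :=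
    continuousOn_const.mul (contOn_quad hg.1 ((line_contDiff x y).continuous.continuousOn)
      continuousOn_const continuousOn_const)
  have hb : ∀ s ∈ Icc (0:ℝ) 1,
      (1/4:ℝ) * quadForm (g (x + s • (y - x))) (y - x) (y - x) ≤ Kc N M / 4 * ‖y - x‖ ^ 2 := by
    intro s _
    have h := (le_abs_self _).trans (H1 hM hg (x + s • (y - x)) (y - x) (y - x))
    have : ‖y - x‖ * ‖y - x‖ = ‖y - x‖ ^ 2 := (sq ‖y - x‖).symm
    nlinarith [h]
  calc (∫ s in (0:ℝ)..1, (1/4:ℝ) * quadForm (g (x + s • (y - x))) (y - x) (y - x))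
      ≤ ∫ _s in (0:ℝ)..1, Kc N M / 4 * ‖y - x‖ ^ 2 :=
        intervalIntegral.integral_mono_on (by norm_num)
          (intervalIntegrable_of_contOn hcont) intervalIntegrable_const hb
    _ = Kc N M / 4 * ‖y - x‖ ^ 2 := by simp

lemma integral_D_sq_le (hM : 0 < M) (hsym : ∀ x, (g x).IsSymm)
    (hell : UniformlyElliptic g Cg) (hg : C2BoundedWith g M)
    (hginv : C2BoundedWith (ginv g) M) {γ : ℝ → EV N} (hγ : ContDiffOn ℝ 1 γ (Icc 0 1)) :
    (∫ s in (0:ℝ)..1, ‖derivWithin γ (Icc 0 1) s‖ ^ 2)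
      ≤ (4 * Kc N M) * ∫ s in (0:ℝ)..1, (1/4 : ℝ) * quadForm (g (γ s))
          (derivWithin γ (Icc 0 1) s) (derivWithin γ (Icc 0 1) s) := by
  set D := derivWithin γ (Icc 0 1) with hD
  have hDc : ContinuousOn D (Icc 0 1) := contOn_derivWithin hγ
  have hc0 : ContinuousOn (fun s => (1/4:ℝ) * quadForm (g (γ s)) (D s) (D s)) (Icc 0 1) :=
    continuousOn_const.mul (contOn_quad hg.1 hγ.continuousOn hDc hDc)
  have hcD : ContinuousOn (fun s => ‖D s‖ ^ 2) (Icc 0 1) := (hDc.norm).pow 2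
  have hb : ∀ s ∈ Icc (0:ℝ) 1,
      ‖D s‖ ^ 2 ≤ (4 * Kc N M) * ((1/4:ℝ) * quadForm (g (γ s)) (D s) (D s)) := by
    intro s _
    have := H2 hM hsym hell hg hginv (γ s) (D s)
    linarith
  calc (∫ s in (0:ℝ)..1, ‖D s‖ ^ 2)
      ≤ ∫ s in (0:ℝ)..1, (4 * Kc N M) * ((1/4:ℝ) * quadForm (g (γ s)) (D s) (D s)) :=
        intervalIntegral.integral_mono_on (by norm_num)
          (intervalIntegrable_of_contOn hcD)
          (intervalIntegrable_of_contOn (continuousOn_const.mul hc0)) hb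
    _ = (4 * Kc N M) * ∫ s in (0:ℝ)..1, (1/4:ℝ) * quadForm (g (γ s)) (D s) (D s) :=
        intervalIntegral.integral_const_mul _ _

set_option maxHeartbeats 1000000 in
lemma second_diff_bound (hM : 0 < M) (hsym : ∀ x, (g x).IsSymm)
    (hell : UniformlyElliptic g Cg) (hg : C2BoundedWith g M) (hginv : C2BoundedWith (ginv g) M)
    (x y p q : EV N) {t : ℝ} (ht : 0 < t) (ht1 : t ≤ 1) :
    energy g (x + t • p) (y + t • q) + energy g (x - t • p) (y - t • q) - 2 * energy g x y
      ≤ t^2 * (3/4 * (Kc N M)^3 * (‖p‖ + ‖q‖)^2 * ‖y - x‖^2 + Kc N M * ‖q - p‖^2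
          + 3 * (Kc N M)^2 * (‖p‖ + ‖q‖)^2 * t^2 + 2 * t^2) := by
  set K := Kc N M with hKdef
  have hK0 : 0 < K := Kc_pos hM
  set R := ‖p‖ + ‖q‖ with hR
  have hR0 : 0 ≤ R := by positivity
  obtain ⟨e', he'mem, he'lt⟩ := exists_nearopt (g := g) x y (δ := t^4) (by positivity)
  obtain ⟨γ, hγ, h0, h1, rfl⟩ := he'mem
  set D := derivWithin γ (Icc 0 1) with hD
  have hDc : ContinuousOn D (Icc 0 1) := contOn_derivWithin hγ
  have hγc : ContinuousOn γ (Icc 0 1) := hγ.continuousOn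
  have hEcongr : (∫ s in (0:ℝ)..1, (1/4:ℝ) * quadForm (g (γ s)) (deriv γ s) (deriv γ s))
      = ∫ s in (0:ℝ)..1, (1/4:ℝ) * quadForm (g (γ s)) (D s) (D s) := by
    apply integral_congr_Ioo; intro s hs; rw [deriv_eq_derivWithin hs]
  set E := ∫ s in (0:ℝ)..1, (1/4:ℝ) * quadForm (g (γ s)) (D s) (D s) with hEdef
  have hElt : E < energy g x y + t^4 := by rwa [hEcongr] at he'lt
  set w : ℝ → EV N := fun s => p + s • (q - p) with hwdef
  set d := q - p with hd
  have hwc : Continuous w := (line_contDiff p q).continuous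
  have hwR : ∀ s ∈ Icc (0:ℝ) 1, ‖w s‖ ≤ R := by
    intro s hs
    have e1 : w s = (1 - s) • p + s • q := by rw [hwdef]; module
    rw [e1]
    have h2 : ‖(1 - s) • p + s • q‖ ≤ ‖(1 - s) • p‖ + ‖s • q‖ := norm_add_le _ _
    rw [norm_smul, norm_smul, Real.norm_eq_abs, Real.norm_eq_abs,
      abs_of_nonneg (by linarith [hs.2] : (0:ℝ) ≤ 1 - s), abs_of_nonneg hs.1] at h2
    have hp0 := norm_nonneg p
    have hq0 := norm_nonneg q
    have hs0 := hs.1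
    have hs1 := hs.2
    nlinarith [h2]
  -- continuity of the integrands
  have hcP : ContinuousOn
      (fun s => (1/4:ℝ) * quadForm (g (γ s + t • w s)) (D s + t • d) (D s + t • d))
      (Icc 0 1) :=
    continuousOn_const.mul (contOn_quad hg.1 (hγc.add ((hwc.const_smul t).continuousOn))
      (hDc.add continuousOn_const) (hDc.add continuousOn_const))
  have hcM : ContinuousOn
      (fun s => (1/4:ℝ) * quadForm (g (γ s - t • w s)) (D s + (-t) • d) (D s + (-t) • d))
      (Icc 0 1) :=
    continuousOn_const.mul (contOn_quad hg.1 (hγc.sub ((hwc.const_smul t).continuousOn))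
      (hDc.add continuousOn_const) (hDc.add continuousOn_const))
  have hc0 : ContinuousOn (fun s => (1/4:ℝ) * quadForm (g (γ s)) (D s) (D s)) (Icc 0 1) :=
    continuousOn_const.mul (contOn_quad hg.1 hγc hDc hDc)
  have hiP := intervalIntegrable_of_contOn hcP
  have hiM := intervalIntegrable_of_contOn hcM
  have hi0 := intervalIntegrable_of_contOn hc0
  have hiDsq := intervalIntegrable_of_contOn (f := fun s => ‖D s‖ ^ 2) ((hDc.norm).pow 2)
  -- energies at the shifted points
  have hplus : energy g (x + t • p) (y + t • q)
      ≤ ∫ s in (0:ℝ)..1, (1/4:ℝ) * quadForm (g (γ s + t • w s)) (D s + t • d) (D s + t • d) := by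
    refine (energy_le_pert hell hγ h0 h1 (t • p) (t • q)).trans (le_of_eq ?_)
    apply intervalIntegral.integral_congr
    intro s _
    dsimp only
    rw [← hD]
    have e1 : γ s + (t • p + s • (t • q - t • p)) = γ s + t • w s := by
      rw [hwdef]; module
    have e2 : D s + (t • q - t • p) = D s + t • d := by rw [hd]; module
    rw [e1, e2]
  have hminus : energy g (x - t • p) (y - t • q)
      ≤ ∫ s in (0:ℝ)..1, (1/4:ℝ) * quadForm (g (γ s - t • w s)) (D s + (-t) • d) (D s + (-t) • d) := by
    have h := energy_le_pert hell hγ h0 h1 (-(t • p)) (-(t • q))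
    rw [show x + -(t • p) = x - t • p from (sub_eq_add_neg _ _).symm,
        show y + -(t • q) = y - t • q from (sub_eq_add_neg _ _).symm] at h
    refine h.trans (le_of_eq ?_)
    apply intervalIntegral.integral_congr
    intro s _
    dsimp only
    rw [← hD]
    have e1 : γ s + (-(t • p) + s • (-(t • q) - -(t • p))) = γ s - t • w s := by
      rw [hwdef]; module
    have e2 : D s + (-(t • q) - -(t • p)) = D s + (-t) • d := by rw [hd]; module
    rw [e1, e2]
  -- second difference of integrals
  have hcomb : (∫ s in (0:ℝ)..1, (1/4:ℝ) * quadForm (g (γ s + t • w s)) (D s + t • d) (D s + t • d))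
      + (∫ s in (0:ℝ)..1, (1/4:ℝ) * quadForm (g (γ s - t • w s)) (D s + (-t) • d) (D s + (-t) • d))
      - 2 * E
      = ∫ s in (0:ℝ)..1,
          ((1/4:ℝ) * quadForm (g (γ s + t • w s)) (D s + t • d) (D s + t • d)
           + (1/4:ℝ) * quadForm (g (γ s - t • w s)) (D s + (-t) • d) (D s + (-t) • d)
           - 2 * ((1/4:ℝ) * quadForm (g (γ s)) (D s) (D s))) := by
    rw [intervalIntegral.integral_sub (hiP.add hiM) (hi0.const_mul 2),
        intervalIntegral.integral_add hiP hiM,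
        intervalIntegral.integral_const_mul 2
          (fun s => (1/4:ℝ) * quadForm (g (γ s)) (D s) (D s)), ← hEdef]
  have hptwise : ∀ s ∈ Icc (0:ℝ) 1,
      (1/4:ℝ) * quadForm (g (γ s + t • w s)) (D s + t • d) (D s + t • d)
        + (1/4:ℝ) * quadForm (g (γ s - t • w s)) (D s + (-t) • d) (D s + (-t) • d)
        - 2 * ((1/4:ℝ) * quadForm (g (γ s)) (D s) (D s))
      ≤ t^2 / 4 * (3 * K * R^2 * ‖D s‖^2 + 4 * K * ‖d‖^2) := by
    intro s hs
    exact core_est hM hg (γ s) (w s) (D s) d ht.le (hwR s hs)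
  have hsum : (∫ s in (0:ℝ)..1, (1/4:ℝ) * quadForm (g (γ s + t • w s)) (D s + t • d) (D s + t • d))
      + (∫ s in (0:ℝ)..1, (1/4:ℝ) * quadForm (g (γ s - t • w s)) (D s + (-t) • d) (D s + (-t) • d))
      - 2 * E
      ≤ ∫ s in (0:ℝ)..1, t^2 / 4 * (3 * K * R^2 * ‖D s‖^2 + 4 * K * ‖d‖^2) := by
    rw [hcomb]
    refine intervalIntegral.integral_mono_on (by norm_num) ?_ ?_ hptwise
    · exact ((hiP.add hiM).sub (hi0.const_mul 2))
    · refine intervalIntegrable_of_contOn (continuousOn_const.mul ?_)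
      exact (continuousOn_const.mul ((hDc.norm).pow 2)).add continuousOn_const
  have hIbnd : (∫ s in (0:ℝ)..1, t^2 / 4 * (3 * K * R^2 * ‖D s‖^2 + 4 * K * ‖d‖^2))
      = t^2 / 4 * (3 * K * R^2 * (∫ s in (0:ℝ)..1, ‖D s‖^2) + 4 * K * ‖d‖^2) := by
    rw [intervalIntegral.integral_const_mul]
    congr 1
    rw [intervalIntegral.integral_add (hiDsq.const_mul _) intervalIntegrable_const,
        intervalIntegral.integral_const_mul]
    simp
  -- bound on ∫ ‖D‖²
  have hI : (∫ s in (0:ℝ)..1, ‖D s‖^2) ≤ 4 * K * E := by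
    have := integral_D_sq_le hM hsym hell hg hginv hγ
    rwa [← hD, ← hEdef, ← hKdef] at this
  have heline : energy g x y ≤ K / 4 * ‖y - x‖^2 := energy_le_line hM hell hg x y
  have hIe : (∫ s in (0:ℝ)..1, ‖D s‖^2) ≤ K^2 * ‖y - x‖^2 + 4 * K * t^4 := by
    have h1 : 4 * K * E ≤ 4 * K * (energy g x y + t^4) :=
      mul_le_mul_of_nonneg_left hElt.le (by positivity)
    have h2 : 4 * K * (energy g x y + t^4) ≤ 4 * K * (K / 4 * ‖y - x‖^2 + t^4) :=
      mul_le_mul_of_nonneg_left (by linarith) (by positivity)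
    calc (∫ s in (0:ℝ)..1, ‖D s‖^2) ≤ 4 * K * E := hI
      _ ≤ 4 * K * (K / 4 * ‖y - x‖^2 + t^4) := le_trans h1 h2
      _ = K^2 * ‖y - x‖^2 + 4 * K * t^4 := by ring
  have ht3 : t^3 ≤ t^2 := by
    nlinarith [mul_nonneg (mul_nonneg ht.le ht.le) (sub_nonneg.mpr ht1)]
  have ht4 : t^4 ≤ t^2 := by
    nlinarith [mul_nonneg (mul_nonneg (mul_nonneg ht.le ht.le) ht.le) (sub_nonneg.mpr ht1), ht3]
  -- final chain
  have hstep3 : 3 * K * R^2 * (∫ s in (0:ℝ)..1, ‖D s‖^2)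
      ≤ 3 * K * R^2 * (K^2 * ‖y - x‖^2 + 4 * K * t^2) := by
    refine mul_le_mul_of_nonneg_left ?_ (by positivity)
    have : 4 * K * t^4 ≤ 4 * K * t^2 := mul_le_mul_of_nonneg_left ht4 (by positivity)
    linarith [hIe]
  have hstep4 : t^2 / 4 * (3 * K * R^2 * (∫ s in (0:ℝ)..1, ‖D s‖^2) + 4 * K * ‖d‖^2)
      ≤ t^2 / 4 * (3 * K * R^2 * (K^2 * ‖y - x‖^2 + 4 * K * t^2) + 4 * K * ‖d‖^2) := by
    refine mul_le_mul_of_nonneg_left (by linarith [hstep3]) (by positivity)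
  have hfin : t^2 / 4 * (3 * K * R^2 * (K^2 * ‖y - x‖^2 + 4 * K * t^2) + 4 * K * ‖d‖^2) + 2 * t^4
      = t^2 * (3/4 * K^3 * R^2 * ‖y - x‖^2 + K * ‖d‖^2 + 3 * K^2 * R^2 * t^2 + 2 * t^2) := by
    ring
  linarith [hplus, hminus, hsum, hIbnd, hstep4, hfin, hElt]

set_option maxHeartbeats 1000000 in
lemma hessian_le_of_seconddiff {E' : Type*} [NormedAddCommGroup E'] [NormedSpace ℝ E']
    {f : E' → ℝ} {z v : E'} {A : ℝ}
    (hf : ContDiffAt ℝ 2 f z)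
    (hbd : ∀ η : ℝ, 0 < η → ∀ᶠ t in nhdsWithin (0:ℝ) (Ioi 0),
        f (z + t • v) + f (z - t • v) - 2 * f z ≤ t ^ 2 * (A + η)) :
    iteratedFDeriv ℝ 2 f z ![v, v] ≤ A := by
  obtain ⟨u, hu_nhds, hu⟩ := hf.contDiffOn (le_refl 2) (by simp)
  set U := interior u with hUdef
  have hUo : IsOpen U := isOpen_interior
  have hzU : z ∈ U := mem_interior_iff_mem_nhds.mpr hu_nhds
  have hfU : ContDiffOn ℝ 2 f U := hu.mono interior_subset
  set c : ℝ → E' := fun t => z + t • v with hcdef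
  have hc0 : c 0 = z := by simp [hcdef]
  have hc_cont : Continuous c := by
    exact continuous_const.add (continuous_id.smul continuous_const)
  have hc_pre : IsOpen (c ⁻¹' U) := hUo.preimage hc_cont
  have h0mem : (0:ℝ) ∈ c ⁻¹' U := by simp [hcdef, hzU]
  obtain ⟨ε, hε, hball⟩ := Metric.isOpen_iff.mp hc_pre 0 h0mem
  have hmemU : ∀ t : ℝ, |t| < ε → c t ∈ U := by
    intro t ht
    exact hball (by simpa [Real.dist_eq] using ht)
  have hcD : ∀ t : ℝ, HasDerivAt c v t := fun t => by
    simpa [hcdef] using ((hasDerivAt_id t).smul_const v).const_add z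
  set φ : ℝ → ℝ := fun t => f (c t) with hφdef
  set ψ : ℝ → ℝ := fun t => fderiv ℝ f (c t) v with hψdef
  have hφ' : ∀ t : ℝ, |t| < ε → HasDerivAt φ (ψ t) t := by
    intro t ht
    have hdf : DifferentiableAt ℝ f (c t) :=
      (hfU.contDiffAt (hUo.mem_nhds (hmemU t ht))).differentiableAt (by norm_num)
    exact hdf.hasFDerivAt.comp_hasDerivAt t (hcD t)
  set L2 := fderiv ℝ (fderiv ℝ f) z with hL2
  have hψ0 : HasDerivAt ψ (L2 v v) 0 := by
    have hf1 : ContDiffAt ℝ 1 (fderiv ℝ f) z := hf.fderiv_right (by norm_num)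
    have hdF : HasFDerivAt (fderiv ℝ f) L2 z := (hf1.differentiableAt one_ne_zero).hasFDerivAt
    have hdF0 : HasFDerivAt (fderiv ℝ f) L2 (c 0) := by rwa [hc0]
    have hcomp : HasDerivAt (fun t => fderiv ℝ f (c t)) (L2 v) 0 :=
      hdF0.comp_hasDerivAt 0 (hcD 0)
    have := hcomp.clm_apply (hasDerivAt_const 0 v)
    simpa using this
  set NUM : ℝ → ℝ := fun t => φ t + φ (-t) - 2 * φ 0 with hNUMdef
  have hNUM' : ∀ t : ℝ, |t| < ε → HasDerivAt NUM (ψ t + ψ (-t) * (-1)) t := by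
    intro t ht
    have h1 : HasDerivAt φ (ψ t) t := hφ' t ht
    have h2 : HasDerivAt (fun s : ℝ => φ (-s)) (ψ (-t) * (-1)) t := by
      have hin : |(-t)| < ε := by rwa [abs_neg]
      exact (hφ' (-t) hin).comp t (hasDerivAt_neg t)
    exact (h1.add h2).sub_const (2 * φ 0)
  have hball_ev : ∀ᶠ t in nhdsWithin (0:ℝ) {(0:ℝ)}ᶜ, |t| < ε := by
    have h1 : ∀ᶠ t in nhds (0:ℝ), |t| < ε := by
      have := Metric.ball_mem_nhds (0:ℝ) hε
      filter_upwards [this] with t ht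
      simpa [Real.dist_eq] using ht
    exact h1.filter_mono nhdsWithin_le_nhds
  have hLim : Filter.Tendsto (fun t => NUM t / t ^ 2)
      (nhdsWithin (0:ℝ) {(0:ℝ)}ᶜ) (nhds (L2 v v)) := by
    apply HasDerivAt.lhopital_zero_nhdsNE
      (f' := fun t => ψ t + ψ (-t) * (-1)) (g' := fun t => 2 * t)
    · filter_upwards [hball_ev] with t ht
      exact hNUM' t ht
    · refine Filter.Eventually.of_forall fun t => ?_
      simpa [two_mul] using (hasDerivAt_pow 2 t)
    · filter_upwards [self_mem_nhdsWithin] with t ht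
      have : t ≠ 0 := ht
      positivity
    · have hcont : ContinuousAt NUM 0 := (hNUM' 0 (by simpa using hε)).continuousAt
      have h0 : NUM 0 = 0 := by simp [hNUMdef]; ring
      have := hcont.tendsto
      rw [h0] at this
      exact this.mono_left nhdsWithin_le_nhds
    · have : Filter.Tendsto (fun t : ℝ => t ^ 2) (nhds 0) (nhds ((0:ℝ) ^ 2)) :=
        (continuous_pow 2).tendsto 0
      simp only [ne_eq, OfNat.ofNat_ne_zero, not_false_eq_true, zero_pow] at this
      exact this.mono_left nhdsWithin_le_nhds
    · -- the derivative quotient tends to L2 v v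
      have hslope : Filter.Tendsto (slope ψ 0) (nhdsWithin (0:ℝ) {(0:ℝ)}ᶜ) (nhds (L2 v v)) :=
        hasDerivAt_iff_tendsto_slope.mp hψ0
      have hneg : Filter.Tendsto (fun t : ℝ => -t)
          (nhdsWithin (0:ℝ) {(0:ℝ)}ᶜ) (nhdsWithin (0:ℝ) {(0:ℝ)}ᶜ) := by
        refine tendsto_nhdsWithin_of_tendsto_nhds_of_eventually_within _ ?_ ?_
        · have := (continuous_neg.tendsto (0:ℝ))
          rw [neg_zero] at this
          exact this.mono_left nhdsWithin_le_nhds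
        · filter_upwards [self_mem_nhdsWithin] with t ht
          have : t ≠ 0 := ht
          simpa using this
      have hslope2 : Filter.Tendsto (fun t => slope ψ 0 (-t))
          (nhdsWithin (0:ℝ) {(0:ℝ)}ᶜ) (nhds (L2 v v)) := hslope.comp hneg
      have hcomb := (hslope.add hslope2).div_const 2
      have hval : (L2 v v + L2 v v) / 2 = L2 v v := by ring
      rw [hval] at hcomb
      refine hcomb.congr' ?_
      filter_upwards [self_mem_nhdsWithin] with t ht
      have htne : t ≠ 0 := ht
      rw [slope_def_field, slope_def_field, sub_zero, sub_zero, div_neg]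
      field_simp
      ring
  rw [iteratedFDeriv_two_apply]
  simp only [Matrix.cons_val_zero, Matrix.cons_val_one, Matrix.head_cons]
  show L2 v v ≤ A
  refine le_of_forall_pos_le_add fun η hη => ?_
  have hsub : nhdsWithin (0:ℝ) (Ioi 0) ≤ nhdsWithin (0:ℝ) {(0:ℝ)}ᶜ :=
    nhdsWithin_mono 0 (fun x hx => ne_of_gt hx)
  have hmono : Filter.Tendsto (fun t => NUM t / t ^ 2)
      (nhdsWithin (0:ℝ) (Ioi 0)) (nhds (L2 v v)) := hLim.mono_left hsub
  refine le_of_tendsto hmono ?_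
  filter_upwards [hbd η hη, self_mem_nhdsWithin] with t hbt htpos
  have htpos' : (0:ℝ) < t := htpos
  have hNUMeq : NUM t = f (z + t • v) + f (z - t • v) - 2 * f z := by
    have e1 : c (-t) = z - t • v := by rw [hcdef]; module
    have e2 : c 0 = z := hc0
    simp only [hNUMdef, hφdef, e1, e2, show c t = z + t • v from rfl]
  rw [hNUMeq]
  rw [div_le_iff₀ (by positivity)]
  calc f (z + t • v) + f (z - t • v) - 2 * f z ≤ t ^ 2 * (A + η) := hbt
    _ = (A + η) * t ^ 2 := by ring

set_option maxHeartbeats 1000000 in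
/-- upper semicontinuity-type estimate for the energy. -/
lemma energy_usc (hM : 0 < M) (hell : UniformlyElliptic g Cg) (hg : C2BoundedWith g M)
    (x y : EV N) {κ : ℝ} (hκ : 0 < κ) :
    ∃ ρ > 0, ∀ x' y' : EV N, ‖x' - x‖ < ρ → ‖y' - y‖ < ρ →
      energy g x' y' ≤ energy g x y + κ := by
  set K := Kc N M with hKdef
  have hK0 : 0 < K := Kc_pos hM
  obtain ⟨e', he'mem, he'lt⟩ := exists_nearopt (g := g) x y (δ := κ/2) (by positivity)
  obtain ⟨γ, hγ, h0, h1, rfl⟩ := he'mem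
  set D := derivWithin γ (Icc 0 1) with hD
  have hDc : ContinuousOn D (Icc 0 1) := contOn_derivWithin hγ
  have hγc : ContinuousOn γ (Icc 0 1) := hγ.continuousOn
  have hEcongr : (∫ s in (0:ℝ)..1, (1/4:ℝ) * quadForm (g (γ s)) (deriv γ s) (deriv γ s))
      = ∫ s in (0:ℝ)..1, (1/4:ℝ) * quadForm (g (γ s)) (D s) (D s) := by
    apply integral_congr_Ioo; intro s hs; rw [deriv_eq_derivWithin hs]
  set E := ∫ s in (0:ℝ)..1, (1/4:ℝ) * quadForm (g (γ s)) (D s) (D s) with hEdef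
  have hElt : E < energy g x y + κ/2 := by rwa [hEcongr] at he'lt
  obtain ⟨C0, hC0⟩ := (isCompact_Icc).exists_bound_of_continuousOn hDc
  set CD := max C0 0 with hCDdef
  have hCD0 : (0:ℝ) ≤ CD := le_max_right _ _
  have hCD : ∀ s ∈ Icc (0:ℝ) 1, ‖D s‖ ≤ CD := fun s hs => (hC0 s hs).trans (le_max_left _ _)
  set CC := K * (CD+2)^2 + K * CD + K with hCC
  have hCC0 : 0 < CC := by positivity
  refine ⟨min 1 (κ/(2*(CC+1))), lt_min one_pos (by positivity), ?_⟩
  intro x' y' hx' hy'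
  set ρ := min 1 (κ/(2*(CC+1))) with hρ
  have hρ1 : ρ ≤ 1 := min_le_left _ _
  have hρ2 : ρ ≤ κ/(2*(CC+1)) := min_le_right _ _
  set a := x' - x with ha
  set b := y' - y with hb
  set d := b - a with hd
  set w : ℝ → EV N := fun s => a + s • d with hw
  have hna : ‖a‖ < ρ := hx'
  have hnb : ‖b‖ < ρ := hy'
  have hnd : ‖d‖ ≤ 2 * ρ := by
    calc ‖d‖ = ‖b - a‖ := by rw [hd]
      _ ≤ ‖b‖ + ‖a‖ := norm_sub_le _ _
      _ ≤ 2 * ρ := by linarith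
  have hnd1 : ‖d‖ ≤ 2 := by linarith
  have hnw : ∀ s ∈ Icc (0:ℝ) 1, ‖w s‖ ≤ 2 * ρ := by
    intro s hs
    have e1 : w s = (1 - s) • a + s • b := by rw [hw, hd]; module
    rw [e1]
    have h2 := norm_add_le ((1 - s) • a) (s • b)
    rw [norm_smul, norm_smul, Real.norm_eq_abs, Real.norm_eq_abs,
      abs_of_nonneg (by linarith [hs.2] : (0:ℝ) ≤ 1 - s), abs_of_nonneg hs.1] at h2
    have h1s := hs.1
    have h2s := hs.2
    nlinarith [norm_nonneg a, norm_nonneg b]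
  -- apply the perturbation lemma
  have hpert : energy g x' y'
      ≤ ∫ s in (0:ℝ)..1, (1/4:ℝ) * quadForm (g (γ s + w s)) (D s + d) (D s + d) := by
    have h := energy_le_pert hell hγ h0 h1 a b
    rw [show x + a = x' from by rw [ha]; abel, show y + b = y' from by rw [hb]; abel] at h
    refine h.trans (le_of_eq ?_)
    apply intervalIntegral.integral_congr
    intro s _
    dsimp only
    all_goals rw [← hD, ← hd, ← hw]
  -- pointwise bound
  have hpt : ∀ s ∈ Icc (0:ℝ) 1,
      (1/4:ℝ) * quadForm (g (γ s + w s)) (D s + d) (D s + d)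
        ≤ (1/4:ℝ) * quadForm (g (γ s)) (D s) (D s) + ρ * CC := by
    intro s hs
    have hDd : ‖D s + d‖ ≤ CD + 2 := by
      have := norm_add_le (D s) d
      have := hCD s hs
      linarith
    have hsplit : quadForm (g (γ s + w s)) (D s + d) (D s + d)
        = quadForm (g (γ s + w s) - g (γ s)) (D s + d) (D s + d)
          + quadForm (g (γ s)) (D s + d) (D s + d) := by
      rw [quadForm_matrix_sub]; ring
    have hexp : quadForm (g (γ s)) (D s + d) (D s + d)
        = quadForm (g (γ s)) (D s) (D s)
          + (quadForm (g (γ s)) (D s) d + quadForm (g (γ s)) d (D s))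
          + quadForm (g (γ s)) d d := by
      have := quadForm_expand (g (γ s)) (D s) d 1
      simpa using this
    have hA : quadForm (g (γ s + w s) - g (γ s)) (D s + d) (D s + d)
        ≤ K * (2*ρ) * ((CD+2) * (CD+2)) := by
      have h := (le_abs_self _).trans (H3 hM hg (γ s + w s) (γ s) (D s + d) (D s + d))
      have harg : γ s + w s - γ s = w s := by abel
      rw [harg] at h
      refine h.trans ?_
      have h1 : K * ‖w s‖ ≤ K * (2*ρ) := mul_le_mul_of_nonneg_left (hnw s hs) hK0.le
      have h2 : ‖D s + d‖ * ‖D s + d‖ ≤ (CD+2) * (CD+2) :=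
        mul_le_mul hDd hDd (norm_nonneg _) (by linarith)
      have h3 : (0:ℝ) ≤ ‖D s + d‖ * ‖D s + d‖ := by positivity
      calc K * ‖w s‖ * (‖D s + d‖ * ‖D s + d‖)
          ≤ K * (2*ρ) * (‖D s + d‖ * ‖D s + d‖) := mul_le_mul_of_nonneg_right h1 h3
        _ ≤ K * (2*ρ) * ((CD+2) * (CD+2)) := by
            refine mul_le_mul_of_nonneg_left h2 ?_
            have : (0:ℝ) < ρ := lt_of_le_of_lt (norm_nonneg a) hna
            positivity
    have hB1 : quadForm (g (γ s)) (D s) d ≤ K * (CD * (2*ρ)) := by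
      have h := (le_abs_self _).trans (H1 hM hg (γ s) (D s) d)
      refine h.trans ?_
      refine mul_le_mul_of_nonneg_left ?_ hK0.le
      exact mul_le_mul (hCD s hs) hnd (norm_nonneg _) hCD0
    have hB2 : quadForm (g (γ s)) d (D s) ≤ K * (CD * (2*ρ)) := by
      have h := (le_abs_self _).trans (H1 hM hg (γ s) d (D s))
      refine h.trans ?_
      refine mul_le_mul_of_nonneg_left ?_ hK0.le
      calc ‖d‖ * ‖D s‖ ≤ (2*ρ) * CD :=
            mul_le_mul hnd (hCD s hs) (norm_nonneg _) (by
              have : (0:ℝ) < ρ := lt_of_le_of_lt (norm_nonneg a) hna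
              positivity)
        _ = CD * (2*ρ) := by ring
    have hC : quadForm (g (γ s)) d d ≤ K * (2 * (2*ρ)) := by
      have h := (le_abs_self _).trans (H1 hM hg (γ s) d d)
      refine h.trans ?_
      refine mul_le_mul_of_nonneg_left ?_ hK0.le
      have := norm_nonneg d
      nlinarith
    have hρ0 : (0:ℝ) < ρ := lt_of_le_of_lt (norm_nonneg a) hna
    rw [hsplit, hexp, hCC]
    have hpos : (0:ℝ) ≤ ρ * (K * (CD+2)^2) := by positivity
    linarith [hA, hB1, hB2, hC, hpos]
  -- integrate the pointwise bound
  have hci : ContinuousOn (fun s => (1/4:ℝ) * quadForm (g (γ s + w s)) (D s + d) (D s + d))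
      (Icc 0 1) := by
    refine continuousOn_const.mul (contOn_quad hg.1 ?_ ?_ ?_)
    · exact hγc.add (line_contDiff a b).continuous.continuousOn
    · exact hDc.add continuousOn_const
    · exact hDc.add continuousOn_const
  have hcb : ContinuousOn (fun s => (1/4:ℝ) * quadForm (g (γ s)) (D s) (D s) + ρ * CC)
      (Icc 0 1) := (continuousOn_const.mul (contOn_quad hg.1 hγc hDc hDc)).add continuousOn_const
  have hint : (∫ s in (0:ℝ)..1, (1/4:ℝ) * quadForm (g (γ s + w s)) (D s + d) (D s + d))
      ≤ ∫ s in (0:ℝ)..1, ((1/4:ℝ) * quadForm (g (γ s)) (D s) (D s) + ρ * CC) :=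
    intervalIntegral.integral_mono_on (by norm_num)
      (intervalIntegrable_of_contOn hci) (intervalIntegrable_of_contOn hcb) hpt
  have hsplitint : (∫ s in (0:ℝ)..1, ((1/4:ℝ) * quadForm (g (γ s)) (D s) (D s) + ρ * CC))
      = E + ρ * CC := by
    rw [intervalIntegral.integral_add
      (intervalIntegrable_of_contOn (f := fun s => (1/4:ℝ) * quadForm (g (γ s)) (D s) (D s)) (continuousOn_const.mul (contOn_quad hg.1 hγc hDc hDc)))
      intervalIntegrable_const, ← hEdef]
    simp
  have hρCC : ρ * CC ≤ κ / 2 := by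
    have h1 : ρ * (CC+1) ≤ κ/(2*(CC+1)) * (CC+1) :=
      mul_le_mul_of_nonneg_right hρ2 (by positivity)
    have h2 : κ/(2*(CC+1)) * (CC+1) = κ/2 := by field_simp
    have hρ0 : (0:ℝ) ≤ ρ := le_of_lt (lt_of_le_of_lt (norm_nonneg a) hna)
    nlinarith [h1, h2]
  linarith [hpert, hint, hsplitint, hElt, hρCC]
end Stmt10

/-- Proposition 4 of the paper: one-sided Hessian bound for the
Riemannian energy, in quadratic-form formulation:
`(p,q)·D²e_g·(p,q)ᵀ ≤ L|p−q|² + L|x−y|²(|p|²+|q|²)` whenever `d_g(x,y) < Υ`, with `L`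
depending only on the `C²`-bounds of `g`, `g⁻¹`. -/
theorem stmt10
    {N : ℕ} (hN : 1 ≤ N) (M : ℝ) (hM : 0 < M) :
    ∃ L : ℝ,
      ∀ (Υ : ℝ), 0 < Υ →
      ∀ (g : EV N → Matrix (Fin N) (Fin N) ℝ) (Cg : ℝ),
        (∀ x, (g x).IsSymm) →
        UniformlyElliptic g Cg →
        C2BoundedWith g M → C2BoundedWith (ginv g) M →
        -- the energy is assumed twice continuously differentiable on the strip
        ContDiffOn ℝ 2 (fun pr : EV N × EV N => energy g pr.1 pr.2)
          {pr : EV N × EV N | dg g pr.1 pr.2 < Υ} →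
        ∀ x y : EV N, dg g x y < Υ → ∀ p q : EV N,
          iteratedFDeriv ℝ 2 (fun pr : EV N × EV N => energy g pr.1 pr.2) (x, y)
              ![(p, q), (p, q)]
            ≤ L * ‖p - q‖ ^ 2 + L * ‖x - y‖ ^ 2 * (‖p‖ ^ 2 + ‖q‖ ^ 2) := by
  classical
  refine ⟨2 * (Stmt10.Kc N M)^3 + Stmt10.Kc N M, ?_⟩
  intro Υ hΥ g Cg hsym hell hg hginv hCDf x y hxy p q
  set K := Stmt10.Kc N M with hKdef
  have hK0 : 0 < K := Stmt10.Kc_pos hM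
  -- the strip is a neighborhood of (x, y)
  have hxy' : Real.sqrt (energy g x y) < Υ := by simpa [dg] using hxy
  have he0 : energy g x y < Υ^2 := (Real.sqrt_lt' hΥ).mp hxy'
  have hκ : 0 < (Υ^2 - energy g x y)/2 := by linarith
  obtain ⟨ρ, hρ0, husc⟩ := Stmt10.energy_usc hM hell hg x y hκ
  have hS : {pr : EV N × EV N | dg g pr.1 pr.2 < Υ} ∈ nhds ((x, y) : EV N × EV N) := by
    rw [Metric.mem_nhds_iff]
    refine ⟨ρ, hρ0, ?_⟩
    intro pr hpr
    have hd1 : dist pr.1 x < ρ := by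
      have h := Metric.mem_ball.mp hpr
      rw [Prod.dist_eq] at h
      exact lt_of_le_of_lt (le_max_left _ _) h
    have hd2 : dist pr.2 y < ρ := by
      have h := Metric.mem_ball.mp hpr
      rw [Prod.dist_eq] at h
      exact lt_of_le_of_lt (le_max_right _ _) h
    rw [dist_eq_norm] at hd1 hd2
    have hbound := husc pr.1 pr.2 hd1 hd2
    show dg g pr.1 pr.2 < Υ
    have : energy g pr.1 pr.2 < Υ^2 := by linarith
    simpa [dg] using (Real.sqrt_lt' hΥ).mpr this
  have hfz : ContDiffAt ℝ 2 (fun pr : EV N × EV N => energy g pr.1 pr.2) (x, y) :=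
    hCDf.contDiffAt hS
  refine Stmt10.hessian_le_of_seconddiff (v := ((p, q) : EV N × EV N)) hfz ?_
  intro η hη
  have hcont : Continuous (fun t : ℝ => 3*K^2*(‖p‖+‖q‖)^2*t^2 + 2*t^2) :=
    (continuous_const.mul (continuous_pow 2)).add (continuous_const.mul (continuous_pow 2))
  have hsm : Filter.Tendsto (fun t : ℝ => 3*K^2*(‖p‖+‖q‖)^2*t^2 + 2*t^2)
      (nhds 0) (nhds 0) := by
    have := hcont.tendsto 0
    simpa using this
  have hev1 : ∀ᶠ t in nhdsWithin (0:ℝ) (Ioi 0), 3*K^2*(‖p‖+‖q‖)^2*t^2 + 2*t^2 < η :=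
    (hsm.eventually (gt_mem_nhds hη)).filter_mono nhdsWithin_le_nhds
  have hev2 : Ioo (0:ℝ) 1 ∈ nhdsWithin (0:ℝ) (Ioi 0) :=
    Ioo_mem_nhdsGT_of_mem ⟨le_refl 0, one_pos⟩
  filter_upwards [hev1, hev2] with t hsmall htIoo
  obtain ⟨ht0, ht1⟩ := htIoo
  have hsd := Stmt10.second_diff_bound hM hsym hell hg hginv x y p q ht0 ht1.le
  have ez1 : ((x, y) : EV N × EV N) + t • (p, q) = (x + t • p, y + t • q) := by
    rw [Prod.smul_mk, Prod.mk_add_mk]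
  have ez2 : ((x, y) : EV N × EV N) - t • (p, q) = (x - t • p, y - t • q) := by
    rw [Prod.smul_mk, Prod.mk_sub_mk]
  rw [ez1, ez2]
  dsimp only
  have hyx : ‖y - x‖ = ‖x - y‖ := norm_sub_rev y x
  have hqp : ‖q - p‖ = ‖p - q‖ := norm_sub_rev q p
  rw [hyx, hqp, ← hKdef] at hsd
  have hR2 : (‖p‖+‖q‖)^2 ≤ 2*(‖p‖^2+‖q‖^2) := by nlinarith [sq_nonneg (‖p‖-‖q‖)]
  have hc34 : (0:ℝ) ≤ 3/4*K^3*‖x-y‖^2 := by positivity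
  have h2 := mul_le_mul_of_nonneg_left hR2 hc34
  have h5 : (0:ℝ) ≤ (K^3) * ((‖p‖^2+‖q‖^2)*‖x-y‖^2) := by positivity
  have h6 : (0:ℝ) ≤ K * ((‖p‖^2+‖q‖^2)*‖x-y‖^2) := by positivity
  have h7 : (0:ℝ) ≤ K^3*‖p-q‖^2 := by positivity
  have hBA : 3/4*K^3*(‖p‖+‖q‖)^2*‖x-y‖^2 + K*‖p-q‖^2
      ≤ (2*K^3 + K)*‖p-q‖^2 + (2*K^3 + K)*‖x-y‖^2*(‖p‖^2+‖q‖^2) := by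
    linarith [h2, h5, h6, h7]
  have hmul : t^2 * (3/4*K^3*(‖p‖+‖q‖)^2*‖x-y‖^2 + K*‖p-q‖^2
        + 3*K^2*(‖p‖+‖q‖)^2*t^2 + 2*t^2)
      ≤ t^2 * (((2*K^3 + K)*‖p-q‖^2 + (2*K^3 + K)*‖x-y‖^2*(‖p‖^2+‖q‖^2)) + η) :=
    mul_le_mul_of_nonneg_left (by linarith [hBA, hsmall.le]) (sq_nonneg t)
  linarith [hsd, hmul]
end
end
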